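/- arXiv:1907.01940 — 7 statements merged into one kernel-verified Lean document; each statement's English description precedes it below -/
import Mathlib

section
/- For all n ≥ 1 and d ≥ 1, every set A ⊆ [n]^d that percolates in d-neighbour bootstrap percolation on [n]^d satisfies |A| ≥ n^{d-1}. -/
/-- The grid `[n]^d = {1,...,n}^d`, embedded in `ℕ^d`. -/
def gridSet (n d : ℕ) : Set (Fin d → ℕ) := {v | ∀ i, 1 ≤ v i ∧ v i ≤ n}

/-- Adjacency: differ by 1 in exactly one coordinate. -/
def gridAdj {d : ℕ} (u v : Fin d → ℕ) : Prop :=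
  ∃ j, (u j = v j + 1 ∨ v j = u j + 1) ∧ ∀ i, i ≠ j → u i = v i

/-- One round of `r`-neighbour bootstrap percolation on `[n]^d`. -/
def bpStep (n d r : ℕ) (S : Set (Fin d → ℕ)) : Set (Fin d → ℕ) :=
  S ∪ {v ∈ gridSet n d | r ≤ {u ∈ S | gridAdj u v}.ncard}

/-- Infected set after `t` rounds, starting from `A`. -/
def infected (n d r : ℕ) (A : Set (Fin d → ℕ)) (t : ℕ) : Set (Fin d → ℕ) :=
  (bpStep n d r)^[t] A

/-- The closure of `A`: all eventually infected vertices. -/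
def bpClosure (n d r : ℕ) (A : Set (Fin d → ℕ)) : Set (Fin d → ℕ) :=
  ⋃ t, infected n d r A t

/-- `A` percolates if every grid vertex is eventually infected. -/
def percolates (n d r : ℕ) (A : Set (Fin d → ℕ)) : Prop :=
  gridSet n d ⊆ bpClosure n d r A

/-- Percolation time: least `t` with the whole grid infected. -/
noncomputable def percTime (n d r : ℕ) (A : Set (Fin d → ℕ)) : ℕ :=
  sInf {t | gridSet n d ⊆ infected n d r A t}

/-- `V_k`: grid vertices of coordinate sum `k`. -/
def hyperplane (n d k : ℕ) : Set (Fin d → ℕ) := {v ∈ gridSet n d | ∑ i, v i = k}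

/-- The "cyclic combination" set `A = ⋃_{i=1}^d V_{in}`. -/
def diagUnion (n d : ℕ) : Set (Fin d → ℕ) :=
  ⋃ i ∈ Finset.Icc 1 d, hyperplane n d (i * n)


namespace BPAux

variable (n d : ℕ)

abbrev V (d : ℕ) := Fin d → ℕ

/-- Grid as a finset. -/
def G : Finset (V d) := Fintype.piFinset (fun _ => Finset.Icc 1 n)

/-- neighbours of `v` in `ℕ^d` (valid when all coords of `v` are ≥ 1). -/
def Nb {d : ℕ} (v : V d) : Finset (V d) :=
  Finset.image (fun p : Fin d × Bool =>
    Function.update v p.1 (if p.2 then v p.1 + 1 else v p.1 - 1)) Finset.univ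

def gridAdj' {d : ℕ} (u v : V d) : Prop :=
  ∃ j, (u j = v j + 1 ∨ v j = u j + 1) ∧ ∀ i, i ≠ j → u i = v i

lemma mem_G {v : V d} : v ∈ G n d ↔ ∀ i, 1 ≤ v i ∧ v i ≤ n := by
  simp [G, Fintype.mem_piFinset]

lemma nb_card {d : ℕ} {v : V d} (hv : ∀ i, 1 ≤ v i) : (Nb v).card = 2 * d := by
  rw [Nb, Finset.card_image_of_injOn, Finset.card_univ]
  · simp [Fintype.card_prod, mul_comm]
  · rintro ⟨j, b⟩ - ⟨k, c⟩ - h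
    have hj := congrFun h j
    have hk := congrFun h k
    simp only [Function.update_apply] at hj hk
    by_cases hjk : j = k
    · subst hjk
      have := hv j
      rcases b <;> rcases c <;> simp_all <;> omega
    · exfalso
      rw [if_pos trivial, if_neg hjk] at hj
      have h1 := hv j
      rcases b <;> simp at hj <;> omega

lemma mem_nb {d : ℕ} {u v : V d} (hv : ∀ i, 1 ≤ v i) :
    u ∈ Nb v ↔ gridAdj' u v := by
  constructor
  · rintro hu
    simp only [Nb, Finset.mem_image, Finset.mem_univ, true_and] at hu
    obtain ⟨⟨j, b⟩, rfl⟩ := hu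
    refine ⟨j, ?_, fun i hi => Function.update_of_ne hi _ _⟩
    cases b
    · right
      simp only [Function.update_self, Bool.false_eq_true, if_false]
      have := hv j; omega
    · left
      simp only [Function.update_self, if_true]
  · rintro ⟨j, hj, heq⟩
    simp only [Nb, Finset.mem_image, Finset.mem_univ, true_and]
    rcases hj with hj | hj
    · refine ⟨(j, true), funext fun i => ?_⟩
      by_cases hij : i = j
      · subst hij; simp [hj]
      · simp [Function.update_apply, hij, heq i hij]
    · refine ⟨(j, false), funext fun i => ?_⟩
      by_cases hij : i = j
      · subst hij; simp; omega
      · simp [Function.update_apply, hij, heq i hij]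

lemma gridAdj'_comm {d : ℕ} {u v : V d} : gridAdj' u v ↔ gridAdj' v u := by
  constructor <;> rintro ⟨j, hj, heq⟩ <;>
    exact ⟨j, hj.symm, fun i hi => (heq i hi).symm⟩

lemma nb_symm {d : ℕ} {u v : V d} (hu : ∀ i, 1 ≤ u i) (hv : ∀ i, 1 ≤ v i) :
    u ∈ Nb v ↔ v ∈ Nb u := by
  rw [mem_nb hv, mem_nb hu, gridAdj'_comm]

end BPAux

namespace BPAux

variable {n d : ℕ}

/-- Boundary edges: ordered pairs from `S` to its complement. -/
def B (S : Finset (V d)) : Finset (V d × V d) :=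
  S.biUnion (fun u => ((Nb u).filter (fun w => w ∉ S)).image (fun w => (u, w)))

lemma mem_B {S : Finset (V d)} {p : V d × V d} :
    p ∈ B S ↔ p.1 ∈ S ∧ p.2 ∈ Nb p.1 ∧ p.2 ∉ S := by
  constructor
  · intro hp
    simp only [B, Finset.mem_biUnion, Finset.mem_image, Finset.mem_filter] at hp
    obtain ⟨u, hu, w, ⟨hw1, hw2⟩, rfl⟩ := hp
    exact ⟨hu, hw1, hw2⟩
  · rintro ⟨h1, h2, h3⟩
    simp only [B, Finset.mem_biUnion, Finset.mem_image, Finset.mem_filter]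
    exact ⟨p.1, h1, p.2, ⟨h2, h3⟩, rfl⟩

def perF (S : Finset (V d)) : ℕ := (B S).card

lemma coords_pos_of_mem_G {v : V d} (hv : v ∈ G n d) : ∀ i, 1 ≤ v i :=
  fun i => ((mem_G n d).1 hv i).1

lemma per_insert {S : Finset (V d)} {v : V d} (hSG : S ⊆ G n d) (hv : v ∈ G n d)
    (hvS : v ∉ S) (hN : d ≤ ((Nb v).filter (· ∈ S)).card) :
    perF (insert v S) ≤ perF S := by
  classical
  set I : Finset (V d) := (Nb v).filter (· ∈ S) with hI
  set Out : Finset (V d) := (Nb v).filter (fun w => w ∉ insert v S) with hOut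
  -- the boundary of `insert v S` is contained in the old boundary minus edges
  -- into `v`, together with edges out of `v`.
  have hsub : B (insert v S) ⊆
      (B S).filter (fun p => p.2 ≠ v) ∪ Out.image (fun w => (v, w)) := by
    intro p hp
    rw [mem_B] at hp
    obtain ⟨h1, h2, h3⟩ := hp
    rcases Finset.mem_insert.1 h1 with rfl | h1'
    · apply Finset.mem_union_right
      rw [Finset.mem_image]
      exact ⟨p.2, Finset.mem_filter.2 ⟨h2, h3⟩, rfl⟩
    · apply Finset.mem_union_left
      rw [Finset.mem_filter, mem_B]
      exact ⟨⟨h1', h2, fun hc => h3 (Finset.mem_insert_of_mem hc)⟩,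
        fun hc => h3 (hc ▸ Finset.mem_insert_self v S)⟩
  -- edges into `v` in the old boundary
  have hin : (B S).filter (fun p => p.2 = v) = I.image (fun u => (u, v)) := by
    ext p
    rw [Finset.mem_filter, mem_B, Finset.mem_image]
    constructor
    · rintro ⟨⟨h1, h2, h3⟩, h4⟩
      refine ⟨p.1, Finset.mem_filter.2 ⟨?_, h1⟩, ?_⟩
      · rw [← nb_symm (coords_pos_of_mem_G hv) (coords_pos_of_mem_G (hSG h1)), ← h4]
        exact h2
      · exact Prod.ext rfl h4.symm
    · rintro ⟨u, hu, rfl⟩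
      rw [hI, Finset.mem_filter] at hu
      refine ⟨⟨hu.2, ?_, hvS⟩, rfl⟩
      rw [nb_symm (coords_pos_of_mem_G hv) (coords_pos_of_mem_G (hSG hu.2))]
      exact hu.1
  have hinc : ((B S).filter (fun p => p.2 = v)).card = I.card := by
    rw [hin]
    exact Finset.card_image_of_injective _ (fun a b h => (Prod.ext_iff.1 h).1)
  have hpart : ((B S).filter (fun p => p.2 = v)).card
      + ((B S).filter (fun p => ¬ p.2 = v)).card = (B S).card :=
    Finset.card_filter_add_card_filter_not _
  have houtI : Out.card + I.card ≤ 2 * d := by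
    have hdisj : Disjoint Out I := by
      rw [Finset.disjoint_left]
      intro w hw hwI
      rw [hOut, Finset.mem_filter] at hw
      rw [hI, Finset.mem_filter] at hwI
      exact hw.2 (Finset.mem_insert_of_mem hwI.2)
    calc Out.card + I.card = (Out ∪ I).card := (Finset.card_union_of_disjoint hdisj).symm
    _ ≤ (Nb v).card := Finset.card_le_card (Finset.union_subset
        (Finset.filter_subset _ _) (Finset.filter_subset _ _))
    _ = 2 * d := nb_card (coords_pos_of_mem_G hv)
  have hIB : I.card ≤ (B S).card := hinc ▸ Finset.card_le_card (Finset.filter_subset _ _)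
  have hmain : perF (insert v S) ≤ ((B S).filter (fun p => ¬ p.2 = v)).card + Out.card := by
    calc perF (insert v S) ≤ ((B S).filter (fun p => p.2 ≠ v) ∪ Out.image (fun w => (v, w))).card :=
        Finset.card_le_card hsub
    _ ≤ ((B S).filter (fun p => p.2 ≠ v)).card + (Out.image (fun w => (v, w))).card :=
        Finset.card_union_le _ _
    _ ≤ ((B S).filter (fun p => ¬ p.2 = v)).card + Out.card := by
        exact Nat.add_le_add le_rfl Finset.card_image_le
  have hNI : d ≤ I.card := hN
  unfold perF at hmain ⊢
  omega

end BPAux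

namespace BPAux

variable {n d : ℕ}

lemma per_union {S : Finset (V d)} (hSG : S ⊆ G n d) (T : Finset (V d))
    (hT : ∀ v ∈ T, v ∈ G n d ∧ d ≤ ((Nb v).filter (· ∈ S)).card) :
    perF (S ∪ T) ≤ perF S := by
  classical
  induction T using Finset.induction_on with
  | empty => simp
  | @insert v T hvT ih =>
    have h1 := hT v (Finset.mem_insert_self v T)
    have hTsub : ∀ w ∈ T, w ∈ G n d ∧ d ≤ ((Nb w).filter (· ∈ S)).card :=
      fun w hw => hT w (Finset.mem_insert_of_mem hw)
    rw [Finset.union_insert]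
    by_cases hv : v ∈ S ∪ T
    · rw [Finset.insert_eq_self.2 hv]
      exact ih hTsub
    · have hsub2 : S ∪ T ⊆ G n d :=
        Finset.union_subset hSG (fun w hw => (hTsub w hw).1)
      have hcard : d ≤ ((Nb v).filter (· ∈ S ∪ T)).card :=
        le_trans h1.2 (Finset.card_le_card (Finset.monotone_filter_right _
          (fun w _ hw => Finset.mem_union_left T hw)))
      exact le_trans (per_insert hsub2 h1.1 hv hcard) (ih hTsub)

/-- One bootstrap round, finset version. -/
def FinStep (n : ℕ) {d : ℕ} (S : Finset (V d)) : Finset (V d) :=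
  S ∪ (G n d).filter (fun v => d ≤ ((Nb v).filter (· ∈ S)).card)

lemma finStep_subset_G {S : Finset (V d)} (hSG : S ⊆ G n d) :
    FinStep n S ⊆ G n d :=
  Finset.union_subset hSG (Finset.filter_subset _ _)

lemma perF_finStep {S : Finset (V d)} (hSG : S ⊆ G n d) :
    perF (FinStep n S) ≤ perF S := by
  apply per_union hSG
  intro v hv
  rw [Finset.mem_filter] at hv
  exact hv

lemma iter_subset_G {S : Finset (V d)} (hSG : S ⊆ G n d) (t : ℕ) :
    (FinStep n)^[t] S ⊆ G n d := by
  induction t with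
  | zero => exact hSG
  | succ t ih => rw [Function.iterate_succ_apply']; exact finStep_subset_G ih

lemma perF_iter {S : Finset (V d)} (hSG : S ⊆ G n d) (t : ℕ) :
    perF ((FinStep n)^[t] S) ≤ perF S := by
  induction t with
  | zero => exact le_rfl
  | succ t ih =>
    rw [Function.iterate_succ_apply']
    exact le_trans (perF_finStep (iter_subset_G hSG t)) ih

lemma gridSet_eq_coe_G : gridSet n d = ↑(G n d) := by
  ext v
  rw [Finset.mem_coe, mem_G]
  rfl

lemma gridAdj_eq : @gridAdj d = @gridAdj' d := rfl

lemma ncard_nbrs (S : Finset (V d)) {v : V d} (hv : ∀ i, 1 ≤ v i) :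
    {u | u ∈ S ∧ gridAdj u v}.ncard = ((Nb v).filter (· ∈ S)).card := by
  classical
  have hset : {u : V d | u ∈ S ∧ gridAdj u v} = ↑((Nb v).filter (· ∈ S)) := by
    ext u
    rw [Finset.coe_filter, Set.mem_setOf_eq, Set.mem_setOf_eq, gridAdj_eq,
      ← mem_nb hv]
    tauto
  rw [hset, Set.ncard_coe_finset]

lemma coe_finStep (S : Finset (V d)) : bpStep n d d ↑S = ↑(FinStep n S) := by
  classical
  unfold bpStep FinStep
  rw [Finset.coe_union, Finset.coe_filter]
  congr 1
  ext v
  simp only [Set.mem_setOf_eq, Set.mem_sep_iff, gridSet_eq_coe_G, Finset.mem_coe, mem_G]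
  constructor
  · rintro ⟨hvG, hvc⟩
    exact ⟨hvG, le_trans hvc (le_of_eq (ncard_nbrs S (fun i => (hvG i).1)))⟩
  · rintro ⟨hvG, hvc⟩
    exact ⟨hvG, le_trans hvc (le_of_eq (ncard_nbrs S (fun i => (hvG i).1)).symm)⟩

lemma coe_infected (S : Finset (V d)) (t : ℕ) :
    infected n d d ↑S t = ↑((FinStep n)^[t] S) := by
  induction t with
  | zero => rfl
  | succ t ih =>
    unfold infected at ih ⊢
    rw [Function.iterate_succ_apply', Function.iterate_succ_apply', ih, coe_finStep]

end BPAux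


namespace BPAux

variable {n d : ℕ}

lemma perF_le (S : Finset (V d)) : perF S ≤ 2 * d * S.card := by
  classical
  unfold perF B
  refine le_trans (Finset.card_biUnion_le) ?_
  rw [mul_comm]
  refine le_trans (Finset.sum_le_card_nsmul _ _ (2 * d) ?_) (le_of_eq (by simp [smul_eq_mul]))
  intro u _
  refine le_trans Finset.card_image_le ?_
  refine le_trans (Finset.card_le_card (Finset.filter_subset _ _)) ?_
  unfold Nb
  refine le_trans Finset.card_image_le ?_
  simp [Fintype.card_prod, mul_comm]

lemma slice_card (hn : 1 ≤ n) (j : Fin d) {c : ℕ} (hc1 : 1 ≤ c) (hc2 : c ≤ n) :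
    ((G n d).filter (fun u => u j = c)).card = n ^ (d - 1) := by
  classical
  have hset : (G n d).filter (fun u => u j = c) =
      Fintype.piFinset (fun i => if i = j then ({c} : Finset ℕ) else Finset.Icc 1 n) := by
    ext u
    rw [Finset.mem_filter, mem_G, Fintype.mem_piFinset]
    constructor
    · rintro ⟨hu, huj⟩ i
      by_cases hij : i = j
      · subst hij; simp [huj]
      · simp only [if_neg hij, Finset.mem_Icc]; exact hu i
    · intro h
      have hj := h j
      rw [if_pos rfl, Finset.mem_singleton] at hj
      refine ⟨fun i => ?_, hj⟩
      by_cases hij : i = j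
      · subst hij; omega
      · have := h i; rw [if_neg hij, Finset.mem_Icc] at this; exact this
  rw [hset, Fintype.card_piFinset]
  have : ∀ i : Fin d, (if i = j then ({c} : Finset ℕ) else Finset.Icc 1 n).card
      = if i = j then 1 else n := by
    intro i
    by_cases hij : i = j <;> simp [hij]
  rw [Finset.prod_congr rfl (fun i _ => this i)]
  rw [← Finset.prod_erase_mul Finset.univ _ (Finset.mem_univ j), if_pos rfl, mul_one]
  rw [Finset.prod_congr rfl (fun i hi => if_neg (Finset.ne_of_mem_erase hi)),
    Finset.prod_const, Finset.card_erase_of_mem (Finset.mem_univ j), Finset.card_univ,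
    Fintype.card_fin]

/-- the boundary edges of the full grid in direction `(j, b)`. -/
def E (n : ℕ) {d : ℕ} (p : Fin d × Bool) : Finset (V d × V d) :=
  ((G n d).filter (fun u => u p.1 = if p.2 then n else 1)).image
    (fun u => (u, Function.update u p.1 (if p.2 then n + 1 else 0)))

lemma E_subset (hn : 1 ≤ n) (p : Fin d × Bool) : E n p ⊆ B (G n d) := by
  classical
  rintro q hq
  obtain ⟨j, b⟩ := p
  simp only [E, Finset.mem_image, Finset.mem_filter] at hq
  obtain ⟨u, ⟨huG, huj⟩, rfl⟩ := hq
  have hpos := coords_pos_of_mem_G huG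
  rw [mem_B]
  refine ⟨huG, ?_, ?_⟩
  · simp only [Nb, Finset.mem_image, Finset.mem_univ, true_and]
    refine ⟨(j, b), ?_⟩
    cases b <;> simp only [if_true, if_false, Bool.false_eq_true] <;> rw [huj] <;> norm_num
  · intro hmem
    rw [mem_G] at hmem
    have h := hmem j
    dsimp only at h
    rw [Function.update_self] at h
    cases b <;> simp at h <;> omega

lemma E_card (hn : 1 ≤ n) (p : Fin d × Bool) : (E n p).card = n ^ (d - 1) := by
  classical
  obtain ⟨j, b⟩ := p
  rw [E, Finset.card_image_of_injective _ (fun a b h => (Prod.ext_iff.1 h).1)]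
  cases b
  · exact slice_card hn j le_rfl hn
  · exact slice_card hn j hn le_rfl

lemma E_disjoint (hn : 1 ≤ n) : ∀ p ∈ (Finset.univ : Finset (Fin d × Bool)),
    ∀ q ∈ (Finset.univ : Finset (Fin d × Bool)), p ≠ q → Disjoint (E n p) (E n q) := by
  classical
  rintro ⟨j, b⟩ - ⟨k, c⟩ - hne
  rw [Finset.disjoint_left]
  rintro x hx hx'
  simp only [E, Finset.mem_image, Finset.mem_filter] at hx hx'
  obtain ⟨u, ⟨huG, huj⟩, hxu⟩ := hx
  obtain ⟨w, ⟨hwG, hwk⟩, hxw⟩ := hx'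
  have huw : u = w := by
    have h1 := congrArg Prod.fst hxu
    have h2 := congrArg Prod.fst hxw
    simp at h1 h2
    exact h1.trans h2.symm
  subst huw
  have hsnd : Function.update u j (if b then n + 1 else 0)
      = Function.update u k (if c then n + 1 else 0) := by
    have h1 := congrArg Prod.snd hxu
    have h2 := congrArg Prod.snd hxw
    simp at h1 h2
    exact h1.trans h2.symm
  by_cases hjk : j = k
  · subst hjk
    have := congrFun hsnd j
    rw [Function.update_self, Function.update_self] at this
    have hbc : b ≠ c := fun h => hne (by rw [h])
    cases b <;> cases c <;> simp_all
  · have := congrFun hsnd k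
    rw [Function.update_of_ne (fun h => hjk h.symm), Function.update_self] at this
    have huk := ((mem_G n d).1 huG) k
    cases c <;> simp at this <;> omega

lemma perF_G_ge (hn : 1 ≤ n) : 2 * d * n ^ (d - 1) ≤ perF (G n d) := by
  classical
  have hsub : (Finset.univ : Finset (Fin d × Bool)).biUnion (fun p => E n p) ⊆ B (G n d) :=
    Finset.biUnion_subset.2 (fun p _ => E_subset hn p)
  calc 2 * d * n ^ (d - 1)
      = ∑ p : Fin d × Bool, n ^ (d - 1) := by
        simp [Finset.sum_const, Fintype.card_prod, mul_comm, mul_assoc, mul_left_comm]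
    _ = ((Finset.univ : Finset (Fin d × Bool)).biUnion (fun p => E n p)).card := by
        rw [Finset.card_biUnion (E_disjoint hn)]
        exact Finset.sum_congr rfl (fun p _ => (E_card hn p).symm)
    _ ≤ perF (G n d) := Finset.card_le_card hsub

end BPAux


open BPAux in
theorem smallest_percolating_lower_bound (n d : ℕ) (hn : 1 ≤ n) (hd : 1 ≤ d)
    (A : Set (Fin d → ℕ)) (hA : A ⊆ gridSet n d) (hperc : percolates n d d A) :
    n ^ (d - 1) ≤ A.ncard := by
  classical
  have hAfin : A.Finite := (G n d).finite_toSet.subset (by rw [← gridSet_eq_coe_G]; exact hA)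
  set A' := hAfin.toFinset with hA'
  have hAcoe : (↑A' : Set (Fin d → ℕ)) = A := hAfin.coe_toFinset
  have hA'G : A' ⊆ G n d := by
    intro x hx
    rw [← Finset.mem_coe, hAcoe] at hx
    have hx2 := hA hx
    rw [gridSet_eq_coe_G, Finset.mem_coe] at hx2
    exact hx2
  have hmono : Monotone (fun t => infected n d d A t) := by
    apply monotone_nat_of_le_succ
    intro t
    show (bpStep n d d)^[t] A ⊆ (bpStep n d d)^[t + 1] A
    rw [Function.iterate_succ_apply']
    exact Set.subset_union_left
  have hex : ∀ x, x ∈ gridSet n d → ∃ t, x ∈ infected n d d A t :=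
    fun x hx => Set.mem_iUnion.1 (hperc hx)
  choose f hf using hex
  set g : (Fin d → ℕ) → ℕ := fun x => if h : x ∈ gridSet n d then f x h else 0 with hg
  set T := (G n d).sup g with hT
  have hgrid : gridSet n d ⊆ infected n d d A T := by
    intro x hx
    have hxt : x ∈ infected n d d A (f x hx) := hf x hx
    have hle : f x hx ≤ T := by
      have hgx : g x = f x hx := dif_pos hx
      rw [← hgx]
      apply Finset.le_sup
      have := hx
      rw [gridSet_eq_coe_G, Finset.mem_coe] at this
      exact this
    exact hmono hle hxt
  have hinf : infected n d d A T = ↑((FinStep n)^[T] A') := by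
    rw [← hAcoe]; exact coe_infected A' T
  have hGeq : (FinStep n)^[T] A' = G n d := by
    apply Finset.Subset.antisymm (iter_subset_G hA'G T)
    intro x hx
    have hx1 : x ∈ gridSet n d := by
      rw [gridSet_eq_coe_G, Finset.mem_coe]; exact hx
    have hx2 := hgrid hx1
    rw [hinf, Finset.mem_coe] at hx2
    exact hx2
  have h1 : perF (G n d) ≤ perF A' := hGeq ▸ perF_iter hA'G T
  have h2 := perF_G_ge (n := n) (d := d) hn
  have h3 := perF_le A'
  have hcard : A.ncard = A'.card := by rw [← hAcoe, Set.ncard_coe_finset]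
  have hmul : 2 * d * n ^ (d - 1) ≤ 2 * d * A'.card :=
    le_trans h2 (le_trans h1 h3)
  rw [hcard]
  exact Nat.le_of_mul_le_mul_left hmul (by omega)
end

section
/- For all n ≥ 1 and d ≥ 1, the set A = ⋃_{i=1}^{d} V_{in}, where V_k = {v ∈ [n]^d : v_1 + ... + v_d = k}, has exactly n^{d-1} elements. -/
lemma diagUnion_aux (n s t : ℕ) (hn : 0 < n) (h1 : 1 ≤ t) (h2 : t ≤ n)
    (hd : n ∣ s + t) : t = n - s % n := by
  obtain ⟨k, hk⟩ := hd
  have hq := Nat.div_add_mod s n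
  have hr : s % n < n := Nat.mod_lt _ hn
  have hlt : n * (s / n) < n * k := by omega
  have h3 : s / n < k := Nat.lt_of_mul_lt_mul_left hlt
  have h4 : n * (s / n + 1) ≤ n * k := Nat.mul_le_mul_left n h3
  have h4' : n * (s / n + 1) = n * (s / n) + n := by ring
  have h5 : n * k < n * (s / n + 2) := by
    have h5' : n * (s / n + 2) = n * (s / n) + n + n := by ring
    omega
  have h6 : k < s / n + 2 := Nat.lt_of_mul_lt_mul_left h5
  have h7 : k = s / n + 1 := by omega
  subst h7
  omega

lemma diagUnion_eq (n d : ℕ) (hn : 1 ≤ n) (hd : 1 ≤ d) :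
    diagUnion n d = {v | v ∈ gridSet n d ∧ n ∣ ∑ i, v i} := by
  ext v
  simp only [diagUnion, hyperplane, Set.mem_iUnion, Set.mem_setOf_eq, Finset.mem_Icc,
    Set.mem_sep_iff, exists_prop]
  constructor
  · rintro ⟨i, ⟨hi1, hi2⟩, hg, hs⟩
    exact ⟨hg, hs ▸ ⟨i, mul_comm i n⟩⟩
  · rintro ⟨hg, k, hk⟩
    have h1 : (d : ℕ) ≤ ∑ i, v i := by
      calc (d : ℕ) = ∑ _i : Fin d, 1 := by simp
      _ ≤ ∑ i, v i := Finset.sum_le_sum (fun i _ => (hg i).1)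
    have h2 : ∑ i, v i ≤ d * n := by
      calc ∑ i, v i ≤ ∑ _i : Fin d, n := Finset.sum_le_sum (fun i _ => (hg i).2)
      _ = d * n := by simp [mul_comm]
    refine ⟨k, ⟨?_, ?_⟩, hg, by rw [hk, mul_comm]⟩
    · rcases Nat.eq_zero_or_pos k with rfl | h
      · rw [mul_zero] at hk; omega
      · exact h
    · have : n * k ≤ n * d := by rw [hk, mul_comm d n] at h2; exact h2
      exact Nat.le_of_mul_le_mul_left this (by omega)

theorem diagUnion_card (n d : ℕ) (hn : 1 ≤ n) (hd : 1 ≤ d) :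
    (diagUnion n d).ncard = n ^ (d - 1) := by
  obtain ⟨m, rfl⟩ : ∃ m, d = m + 1 := ⟨d - 1, by omega⟩
  simp only [Nat.add_sub_cancel]
  set φ : (Fin m → Fin n) → (Fin (m + 1) → ℕ) := fun x =>
    Fin.snoc (fun i => (x i : ℕ) + 1) (n - (∑ i, ((x i : ℕ) + 1)) % n) with hφ
  have hinj : Function.Injective φ := by
    intro x y hxy
    funext i
    have := congrFun hxy i.castSucc
    simp only [hφ, Fin.snoc_castSucc] at this
    exact Fin.ext (by omega)
  have himg : φ '' Set.univ = diagUnion n (m + 1) := by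
    rw [diagUnion_eq n (m + 1) hn hd]
    ext v
    simp only [Set.image_univ, Set.mem_range, Set.mem_setOf_eq]
    constructor
    · rintro ⟨x, rfl⟩
      have hsm : (∑ i, ((x i : ℕ) + 1)) % n < n := Nat.mod_lt _ (by omega)
      constructor
      · intro i
        refine Fin.lastCases ?_ ?_ i
        · simp only [hφ, Fin.snoc_last]
          omega
        · intro j
          simp only [hφ, Fin.snoc_castSucc]
          exact ⟨by omega, (x j).2⟩
      · have hsum : ∑ i, φ x i =
            (∑ i, ((x i : ℕ) + 1)) + (n - (∑ i, ((x i : ℕ) + 1)) % n) := by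
          rw [Fin.sum_univ_castSucc]
          simp [hφ]
        rw [hsum]
        refine ⟨(∑ i, ((x i : ℕ) + 1)) / n + 1, ?_⟩
        have h1 := Nat.div_add_mod (∑ i, ((x i : ℕ) + 1)) n
        have h2 : n * ((∑ i, ((x i : ℕ) + 1)) / n + 1)
            = n * ((∑ i, ((x i : ℕ) + 1)) / n) + n := by ring
        omega
    · rintro ⟨hg, k, hk⟩
      have hx : ∀ i : Fin m, (v i.castSucc - 1) < n := fun i => by
        have := hg i.castSucc; omega
      refine ⟨fun i => ⟨v i.castSucc - 1, hx i⟩, ?_⟩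
      have hcoord : ∀ i : Fin m, (v i.castSucc - 1) + 1 = v i.castSucc := fun i => by
        have := hg i.castSucc; omega
      funext i
      refine Fin.lastCases ?_ ?_ i
      · simp only [hφ, Fin.snoc_last]
        have hseq : ∑ i : Fin m, ((v i.castSucc - 1) + 1) = ∑ i : Fin m, v i.castSucc :=
          Finset.sum_congr rfl (fun i _ => hcoord i)
        rw [hseq]
        have hsplit : ∑ i, v i = (∑ i : Fin m, v i.castSucc) + v (Fin.last m) :=
          Fin.sum_univ_castSucc v
        have hvl := hg (Fin.last m)
        exact (diagUnion_aux n (∑ i : Fin m, v i.castSucc) (v (Fin.last m))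
          (by omega) hvl.1 hvl.2 ⟨k, by omega⟩).symm
      · intro j
        simp only [hφ, Fin.snoc_castSucc]
        exact hcoord j
  rw [← himg, Set.ncard_image_of_injective _ hinj]
  simp [Set.ncard_univ, Nat.card_eq_fintype_card]
end

section
/- For all n ≥ 1 and d ≥ 1, the set A = ⋃_{i=1}^{d} V_{in} percolates in d-neighbour bootstrap percolation on [n]^d, where V_k = {v ∈ [n]^d : Σ v_i = k}. -/
/-! ### Auxiliary lemmas -/

lemma bp_infected_succ (n d r : ℕ) (A : Set (Fin d → ℕ)) (t : ℕ) :
    infected n d r A t ⊆ infected n d r A (t + 1) := by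
  intro x hx
  show x ∈ (bpStep n d r)^[t + 1] A
  rw [Function.iterate_succ_apply']
  exact Set.mem_union_left _ hx

lemma bp_infected_mono (n d r : ℕ) (A : Set (Fin d → ℕ)) {s t : ℕ} (h : s ≤ t) :
    infected n d r A s ⊆ infected n d r A t := by
  induction t with
  | zero =>
    have : s = 0 := Nat.le_zero.mp h
    subst this; exact Set.Subset.rfl
  | succ t ih =>
    rcases Nat.lt_or_ge s (t + 1) with h' | h'
    · exact (ih (Nat.lt_succ_iff.mp h')).trans (bp_infected_succ n d r A t)
    · have : s = t + 1 := le_antisymm h h'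
      subst this; exact Set.Subset.rfl

lemma bp_nbr_finite {d : ℕ} (v : Fin d → ℕ) : {u : Fin d → ℕ | gridAdj u v}.Finite := by
  have hsub : {u : Fin d → ℕ | gridAdj u v} ⊆
      ⋃ j : Fin d,
        ({Function.update v j (v j + 1), Function.update v j (v j - 1)} : Set (Fin d → ℕ)) := by
    rintro u ⟨j, hj, hoth⟩
    refine Set.mem_iUnion.mpr ⟨j, ?_⟩
    simp only [Set.mem_insert_iff, Set.mem_singleton_iff]
    rcases hj with h | h
    · left
      funext i
      by_cases hij : i = j
      · subst hij; rw [Function.update_self]; exact h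
      · rw [Function.update_of_ne hij]; exact hoth i hij
    · right
      funext i
      by_cases hij : i = j
      · subst hij; rw [Function.update_self]; omega
      · rw [Function.update_of_ne hij]; exact hoth i hij
  exact Set.Finite.subset
    (Set.finite_iUnion fun j => (Set.finite_singleton _).insert _) hsub

lemma bp_mem_closure (n d : ℕ) (A : Set (Fin d → ℕ)) {v : Fin d → ℕ}
    (hv : v ∈ gridSet n d) (F : Finset (Fin d → ℕ)) (hcard : d ≤ F.card)
    (hadj : ∀ u ∈ F, gridAdj u v) (hcl : ∀ u ∈ F, u ∈ bpClosure n d d A) :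
    v ∈ bpClosure n d d A := by
  have hex : ∀ u : {x // x ∈ F}, ∃ t, (u : Fin d → ℕ) ∈ infected n d d A t := by
    intro u
    exact Set.mem_iUnion.mp (hcl u u.2)
  choose f hf using hex
  set T := F.attach.sup f with hT
  have hmem : ∀ u ∈ F, u ∈ infected n d d A T := by
    intro u hu
    exact bp_infected_mono n d d A (Finset.le_sup (Finset.mem_attach F ⟨u, hu⟩)) (hf ⟨u, hu⟩)
  have hstep : v ∈ infected n d d A (T + 1) := by
    show v ∈ (bpStep n d d)^[T + 1] A
    rw [Function.iterate_succ_apply']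
    refine Set.mem_union_right _ ⟨hv, ?_⟩
    have hsub : (↑F : Set (Fin d → ℕ)) ⊆ {u ∈ infected n d d A T | gridAdj u v} :=
      fun u hu => ⟨hmem u hu, hadj u hu⟩
    have hfin : {u ∈ infected n d d A T | gridAdj u v}.Finite :=
      (bp_nbr_finite v).subset (fun u hu => hu.2)
    calc d ≤ F.card := hcard
      _ = (↑F : Set (Fin d → ℕ)).ncard := (Set.ncard_coe_finset F).symm
      _ ≤ _ := Set.ncard_le_ncard hsub hfin
  exact Set.mem_iUnion.mpr ⟨T + 1, hstep⟩

lemma bp_grid_base {n d : ℕ} (hn : 1 ≤ n) (hd : 1 ≤ d) {v : Fin d → ℕ}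
    (hv : v ∈ gridSet n d) (h : (∑ i, v i) % n = 0) : v ∈ diagUnion n d := by
  have hk1 : d ≤ ∑ i, v i := by
    calc d = ∑ _i : Fin d, 1 := by simp
      _ ≤ ∑ i, v i := Finset.sum_le_sum (fun i _ => (hv i).1)
  have hk2 : (∑ i, v i) ≤ d * n := by
    calc (∑ i, v i) ≤ ∑ _i : Fin d, n := Finset.sum_le_sum (fun i _ => (hv i).2)
      _ = d * n := by simp [Finset.sum_const, Finset.card_univ, smul_eq_mul]
  obtain ⟨i, hi⟩ := Nat.dvd_of_mod_eq_zero h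
  have hi1 : 1 ≤ i := by
    rcases Nat.eq_zero_or_pos i with h' | h'
    · subst h'; rw [mul_zero] at hi; omega
    · exact h'
  have hi2 : i ≤ d := by
    rw [mul_comm d n] at hk2
    rw [hi] at hk2
    exact Nat.le_of_mul_le_mul_left hk2 (by omega)
  refine Set.mem_iUnion₂.mpr ⟨i, Finset.mem_Icc.mpr ⟨hi1, hi2⟩, ?_⟩
  exact ⟨hv, by rw [hi, mul_comm]⟩

lemma bp_mod_succ {n k a : ℕ} (h : k % n = a) (h2 : a + 1 < n) : (k + 1) % n = a + 1 := by
  have h1 : 1 % n = 1 := Nat.mod_eq_of_lt (by omega)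
  rw [Nat.add_mod, h, h1, Nat.mod_eq_of_lt h2]

lemma bp_mod_succ_zero {n k a : ℕ} (h : k % n = a) (h2 : a + 1 = n) (ha : 1 ≤ a) :
    (k + 1) % n = 0 := by
  have h1 : 1 % n = 1 := Nat.mod_eq_of_lt (by omega)
  rw [Nat.add_mod, h, h1, h2, Nat.mod_self]

lemma bp_mod_pred {n k a : ℕ} (hn : 0 < n) (h : k % n = a) (ha : 1 ≤ a) :
    (k - 1) % n = a - 1 := by
  have hq : n * (k / n) + a = k := by rw [← h]; exact Nat.div_add_mod k n
  have halt : a < n := by rw [← h]; exact Nat.mod_lt _ hn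
  generalize hM : n * (k / n) = M at hq
  have h1 : k - 1 = M + (a - 1) := by omega
  rw [h1, ← hM, Nat.mul_add_mod, Nat.mod_eq_of_lt (by omega)]

lemma bp_sum_update_sq {d : ℕ} (v : Fin d → ℕ) (j : Fin d) (w : ℕ) :
    (∑ i, Function.update v j w i ^ 2) + v j ^ 2 = (∑ i, v i ^ 2) + w ^ 2 := by
  classical
  rw [← Finset.add_sum_erase Finset.univ (fun i => Function.update v j w i ^ 2)
      (Finset.mem_univ j),
    ← Finset.add_sum_erase Finset.univ (fun i => v i ^ 2) (Finset.mem_univ j)]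
  have h : ∑ i ∈ Finset.univ.erase j, Function.update v j w i ^ 2
      = ∑ i ∈ Finset.univ.erase j, v i ^ 2 :=
    Finset.sum_congr rfl fun i hi => by rw [Function.update_of_ne (Finset.mem_erase.mp hi).1]
  rw [h, Function.update_self]; ring

lemma bp_sum_update_id {d : ℕ} (v : Fin d → ℕ) (j : Fin d) (w : ℕ) :
    (∑ i, Function.update v j w i) + v j = (∑ i, v i) + w := by
  classical
  rw [← Finset.add_sum_erase Finset.univ (fun i => Function.update v j w i)
      (Finset.mem_univ j),
    ← Finset.add_sum_erase Finset.univ (fun i => v i) (Finset.mem_univ j)]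
  have h : ∑ i ∈ Finset.univ.erase j, Function.update v j w i
      = ∑ i ∈ Finset.univ.erase j, v i :=
    Finset.sum_congr rfl fun i hi => by rw [Function.update_of_ne (Finset.mem_erase.mp hi).1]
  rw [h, Function.update_self]; ring

/-- The decreasing measure. -/
def bpMeas (n : ℕ) {d : ℕ} (v : Fin d → ℕ) : ℕ :=
  (∑ i, v i ^ 2) + (n - (∑ i, v i) % n) * (n + (∑ i, v i) % n + 1)

lemma bp_meas_up {n d : ℕ} (v : Fin d → ℕ) (j : Fin d) (a : ℕ)
    (ha : (∑ i, v i) % n = a) (hja : v j ≤ a) (h2 : a + 1 < n)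
    (hsum : (∑ i, Function.update v j (v j + 1) i) % n = a + 1) :
    bpMeas n (Function.update v j (v j + 1)) < bpMeas n v := by
  have hsq := bp_sum_update_sq v j (v j + 1)
  unfold bpMeas
  rw [hsum, ha]
  obtain ⟨c, hc⟩ : ∃ c, n = a + 2 + c := ⟨n - (a + 2), by omega⟩
  subst hc
  have e1 : a + 2 + c - (a + 1) = c + 1 := by omega
  have e2 : a + 2 + c - a = c + 2 := by omega
  rw [e1, e2]
  have hx : (v j + 1) ^ 2 = v j ^ 2 + 2 * v j + 1 := by ring
  have hS : (∑ i, Function.update v j (v j + 1) i ^ 2) = (∑ i, v i ^ 2) + 2 * v j + 1 := by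
    linarith [hsq, hx]
  have e3 : (c + 1) * (a + 2 + c + (a + 1) + 1) + (2 * a + 2)
      = (c + 2) * (a + 2 + c + a + 1) := by ring
  linarith [hS, e3, hja]

lemma bp_meas_down {n d : ℕ} (v : Fin d → ℕ) (j : Fin d) (b : ℕ)
    (ha : (∑ i, v i) % n = b + 2) (hj : b + 2 < v j) (hn : b + 2 < n)
    (hsum : (∑ i, Function.update v j (v j - 1) i) % n = b + 1) :
    bpMeas n (Function.update v j (v j - 1)) < bpMeas n v := by
  have hsq := bp_sum_update_sq v j (v j - 1)
  unfold bpMeas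
  rw [hsum, ha]
  obtain ⟨c, hc⟩ : ∃ c, n = b + 3 + c := ⟨n - (b + 3), by omega⟩
  subst hc
  have e1 : b + 3 + c - (b + 1) = c + 2 := by omega
  have e2 : b + 3 + c - (b + 2) = c + 1 := by omega
  rw [e1, e2]
  obtain ⟨w, hw⟩ : ∃ w, v j = w + 1 := ⟨v j - 1, by omega⟩
  rw [hw] at hsq
  simp only [Nat.add_sub_cancel] at hsq
  have hx : (w + 1) ^ 2 = w ^ 2 + 2 * w + 1 := by ring
  have hS : (∑ i, Function.update v j (v j - 1) i ^ 2) + 2 * w + 1 = (∑ i, v i ^ 2) := by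
    have : (∑ i, Function.update v j (v j - 1) i ^ 2)
        = (∑ i, Function.update v j w i ^ 2) := by rw [hw, Nat.add_sub_cancel]
    rw [this]
    linarith [hsq, hx]
  have hwb : b + 2 ≤ w := by omega
  have e3 : (c + 2) * (b + 3 + c + (b + 1) + 1)
      = (c + 1) * (b + 3 + c + (b + 2) + 1) + (2 * b + 4) := by ring
  linarith [hS, e3, hwb]

lemma bp_main (n d : ℕ) (hn : 1 ≤ n) (hd : 1 ≤ d) :
    ∀ N : ℕ, ∀ v : Fin d → ℕ, bpMeas n v < N → v ∈ gridSet n d →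
      v ∈ bpClosure n d d (diagUnion n d) := by
  intro N
  induction N with
  | zero => intro v h _; exact absurd h (Nat.not_lt_zero _)
  | succ N ih =>
    intro v hN hv
    by_cases h0 : (∑ i, v i) % n = 0
    · exact Set.mem_iUnion.mpr ⟨0, by
        simpa [infected] using bp_grid_base hn hd hv h0⟩
    · have ha : (∑ i, v i) % n = (∑ i, v i) % n := rfl
      set a := (∑ i, v i) % n with hadef
      have ha1 : 1 ≤ a := Nat.one_le_iff_ne_zero.mpr h0
      have han : a < n := by rw [hadef]; exact Nat.mod_lt _ (by omega)
      set c : Fin d → (Fin d → ℕ) :=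
        fun j => Function.update v j (if v j ≤ a then v j + 1 else v j - 1) with hcdef
      have hgrid : ∀ j, c j ∈ gridSet n d := by
        intro j i
        by_cases hij : i = j
        · subst hij
          simp only [hcdef, Function.update_self]
          by_cases hj : v i ≤ a
        
          · rw [if_pos hj]; omega
          · rw [if_neg hj]
            have := (hv i).2
            omega
        · simp only [hcdef, Function.update_of_ne hij]
          exact hv i
      have hadj : ∀ j, gridAdj (c j) v := by
        intro j
        refine ⟨j, ?_, fun i hi => by simp only [hcdef, Function.update_of_ne hi]⟩
        by_cases hj : v j ≤ a
        · left; simp only [hcdef, Function.update_self, if_pos hj]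
        · right
          simp only [hcdef, Function.update_self, if_neg hj]
          have := (hv j).1
          omega
      have hclosure : ∀ j, c j ∈ bpClosure n d d (diagUnion n d) := by
        intro j
        by_cases hj : v j ≤ a
        · -- up move
          have hcj : c j = Function.update v j (v j + 1) := by
            simp only [hcdef]; rw [if_pos hj]
          have hksum : (∑ i, c j i) = (∑ i, v i) + 1 := by
            rw [hcj]
            have := bp_sum_update_id v j (v j + 1)
            omega
          by_cases hlast : a + 1 = n
          · have hmod : (∑ i, c j i) % n = 0 := by
              rw [hksum]; exact bp_mod_succ_zero hadef.symm hlast ha1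
            exact Set.mem_iUnion.mpr ⟨0, by
              simpa [infected] using bp_grid_base hn hd (hgrid j) hmod⟩
          · have hmod : (∑ i, c j i) % n = a + 1 := by
              rw [hksum]; exact bp_mod_succ hadef.symm (by omega)
            have hdec : bpMeas n (c j) < bpMeas n v := by
              rw [hcj]
              exact bp_meas_up v j a hadef.symm hj (by omega) (by rw [← hcj]; exact hmod)
            exact ih (c j) (by omega) (hgrid j)
        · -- down move
          have hvj : a < v j := not_le.mp hj
          have hcj : c j = Function.update v j (v j - 1) := by
            simp only [hcdef]; rw [if_neg hj]
          have hksum : (∑ i, c j i) + 1 = (∑ i, v i) := by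
            rw [hcj]
            have := bp_sum_update_id v j (v j - 1)
            have h1 := (hv j).1
            omega
          have hmod : (∑ i, c j i) % n = a - 1 := by
            have : (∑ i, c j i) = (∑ i, v i) - 1 := by omega
            rw [this]
            exact bp_mod_pred (by omega) hadef.symm ha1
          by_cases hone : a = 1
          · have hmod0 : (∑ i, c j i) % n = 0 := by rw [hmod, hone]
            exact Set.mem_iUnion.mpr ⟨0, by
              simpa [infected] using bp_grid_base hn hd (hgrid j) hmod0⟩
          · have ha2 : 2 ≤ a := by omega
            obtain ⟨b, hb⟩ : ∃ b, a = b + 2 := ⟨a - 2, by omega⟩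
            have hdec : bpMeas n (c j) < bpMeas n v := by
              rw [hcj]
              refine bp_meas_down v j b ?_ ?_ ?_ ?_
              · exact hb ▸ hadef.symm
              · omega
              · omega
              · rw [← hcj, hmod]; omega
            exact ih (c j) (by omega) (hgrid j)
      -- assemble the finset of children
      have hinj : Function.Injective c := by
        intro j j' h
        by_contra hne
        have h1 : c j j ≠ v j := by
          simp only [hcdef, Function.update_self]
          have := (hv j).1
          by_cases hj : v j ≤ a
          · rw [if_pos hj]; omega
          · rw [if_neg hj]; omega
        have h2 : c j' j = v j := by
          simp only [hcdef]
          exact Function.update_of_ne (fun hh => hne hh) _ _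
        exact h1 (by rw [h, h2])
      have hcard : d ≤ (Finset.image c Finset.univ).card := by
        rw [Finset.card_image_of_injective _ hinj, Finset.card_univ, Fintype.card_fin]
      refine bp_mem_closure n d (diagUnion n d) hv (Finset.image c Finset.univ) hcard ?_ ?_
      · intro u hu
        obtain ⟨j, _, rfl⟩ := Finset.mem_image.mp hu
        exact hadj j
      · intro u hu
        obtain ⟨j, _, rfl⟩ := Finset.mem_image.mp hu
        exact hclosure j

theorem diagUnion_percolates (n d : ℕ) (hn : 1 ≤ n) (hd : 1 ≤ d) :
    percolates n d d (diagUnion n d) := by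
  intro v hv
  exact bp_main n d hn hd (bpMeas n v + 1) v (Nat.lt_succ_self _) hv
end

section
/- For all n, d ≥ 1, the minimum size of a percolating set in d-neighbour bootstrap percolation on [n]^d equals n^{d-1}. -/
namespace SPS

/-- residue of the coordinate sum -/
def sres (n : ℕ) {d : ℕ} (v : Fin d → ℕ) : ℕ := (∑ i, v i) % n

/-- decreasing potential for the bootstrap certificate -/
def Phi (n : ℕ) {d : ℕ} (v : Fin d → ℕ) : ℕ :=
  (∑ i, (n - v i) ^ 2) + (sres n v) * (2 * n - sres n v - 1)

/-- the designated neighbour of a non-seed vertex in direction j -/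
def dnbr (n : ℕ) {d : ℕ} (v : Fin d → ℕ) (j : Fin d) : Fin d → ℕ :=
  Function.update v j (if v j ≤ sres n v then v j + 1 else v j - 1)

lemma sum_update {d : ℕ} (v : Fin d → ℕ) (j : Fin d) (x : ℕ) :
    (∑ i, Function.update v j x i) = x + ∑ i ∈ Finset.univ.erase j, v i := by
  rw [show (fun i => Function.update v j x i) = Function.update v j x from rfl]
  rw [Finset.sum_update_of_mem (Finset.mem_univ j)]
  congr 1
  · exact (Finset.sum_congr (by rw [Finset.sdiff_singleton_eq_erase]) fun i hi => rfl)

lemma sum_sq_update (n : ℕ) {d : ℕ} (v : Fin d → ℕ) (j : Fin d) (x : ℕ) :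
    (∑ i, (n - Function.update v j x i) ^ 2)
      = (n - x) ^ 2 + ∑ i ∈ Finset.univ.erase j, (n - v i) ^ 2 := by
  have h : (fun i => (n - Function.update v j x i) ^ 2)
      = Function.update (fun i => (n - v i) ^ 2) j ((n - x) ^ 2) := by
    funext i
    by_cases hij : i = j
    · subst hij; simp
    · simp [Function.update_of_ne hij]
  rw [h, Finset.sum_update_of_mem (Finset.mem_univ j)]
  congr 1
  exact (Finset.sum_congr (by rw [Finset.sdiff_singleton_eq_erase]) fun i hi => rfl)

lemma sum_split {d : ℕ} (v : Fin d → ℕ) (j : Fin d) :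
    (∑ i, v i) = v j + ∑ i ∈ Finset.univ.erase j, v i :=
  (Finset.add_sum_erase _ _ (Finset.mem_univ j)).symm

lemma key_up (n s δ : ℕ) (hs1 : 1 ≤ s) (hs : s + 1 < n) (hδ : n - s ≤ δ) (hδn : δ ≤ n) :
    (δ - 1) ^ 2 + (s + 1) * (2 * n - (s + 1) - 1) < δ ^ 2 + s * (2 * n - s - 1) := by
  obtain ⟨P, hP⟩ : ∃ P, 2 * n - s - 1 = P ∧ P + s + 1 = 2 * n := ⟨_, rfl, by omega⟩
  obtain ⟨Q, hQ⟩ : ∃ Q, 2 * n - (s + 1) - 1 = Q ∧ Q + s + 2 = 2 * n := ⟨_, rfl, by omega⟩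
  obtain ⟨D, hD⟩ : ∃ D, δ - 1 = D ∧ D + 1 = δ := ⟨_, rfl, by omega⟩
  obtain ⟨E, hE⟩ : ∃ E, E + s = n ∧ E ≤ δ := ⟨n - s, by omega, by omega⟩
  rw [hP.1, hQ.1, hD.1]
  nlinarith [hE.2, hE.1, hP.2, hQ.2, hD.2, sq_nonneg D]

lemma key_down (n s δ : ℕ) (hs1 : 1 ≤ s) (hsn : s < n) (hδ : δ + s < n) :
    (δ + 1) ^ 2 + (s - 1) * (2 * n - (s - 1) - 1) < δ ^ 2 + s * (2 * n - s - 1) := by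
  obtain ⟨P, hP⟩ : ∃ P, 2 * n - s - 1 = P ∧ P + s + 1 = 2 * n := ⟨_, rfl, by omega⟩
  obtain ⟨Q, hQ⟩ : ∃ Q, 2 * n - (s - 1) - 1 = Q ∧ Q + s = 2 * n := ⟨_, rfl, by omega⟩
  obtain ⟨T, hT⟩ : ∃ T, s - 1 = T ∧ T + 1 = s := ⟨_, rfl, by omega⟩
  rw [hP.1, hQ.1, hT.1]
  nlinarith [hP.2, hQ.2, hT.2, hδ]

lemma grid_mem {n d : ℕ} {v : Fin d → ℕ} (hv : v ∈ gridSet n d) (i : Fin d) :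
    1 ≤ v i ∧ v i ≤ n := hv i

lemma sres_lt {n d : ℕ} (hn : 1 ≤ n) (v : Fin d → ℕ) : sres n v < n :=
  Nat.mod_lt _ hn

/-- the heart: the designated neighbour is a grid point, adjacent, of smaller potential -/
lemma dnbr_spec {n d : ℕ} (hn : 1 ≤ n) {v : Fin d → ℕ} (hv : v ∈ gridSet n d)
    (hs : sres n v ≠ 0) (j : Fin d) :
    dnbr n v j ∈ gridSet n d ∧ gridAdj (dnbr n v j) v ∧ Phi n (dnbr n v j) < Phi n v := by
  set s := sres n v with hsdef
  have hs1 : 1 ≤ s := Nat.one_le_iff_ne_zero.mpr hs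
  have hs2 : s < n := sres_lt hn v
  have hvj1 : 1 ≤ v j := (hv j).1
  have hvjn : v j ≤ n := (hv j).2
  have hmod : (∑ i, v i) % n = s := rfl
  have hdiv : n * ((∑ i, v i) / n) + s = ∑ i, v i := by
    rw [← hmod]; exact Nat.div_add_mod _ n
  by_cases hle : v j ≤ s
  · -- up move
    have hx : dnbr n v j = Function.update v j (v j + 1) := by
      unfold dnbr; rw [if_pos hle]
    have hgrid : Function.update v j (v j + 1) ∈ gridSet n d := by
      intro i
      by_cases hij : i = j
      · subst hij; simp only [Function.update_self]; omega
      · rw [Function.update_of_ne hij]; exact hv i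
    have hsum' : (∑ i, Function.update v j (v j + 1) i) = (∑ i, v i) + 1 := by
      rw [sum_update, sum_split v j]; ring
    have hadj : gridAdj (Function.update v j (v j + 1)) v := by
      refine ⟨j, Or.inl (by simp), fun i hij => Function.update_of_ne hij _ _⟩
    have hsres' : sres n (Function.update v j (v j + 1)) = (s + 1) % n := by
      rw [sres, hsum']
      have h9 : (∑ i, v i) + 1 = n * ((∑ i, v i) / n) + (s + 1) := by omega
      rw [h9, Nat.mul_add_mod]
    rw [hx]
    refine ⟨hgrid, hadj, ?_⟩
    -- potential decrease
    have hPhiu : Phi n (Function.update v j (v j + 1))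
        = (n - (v j + 1)) ^ 2 + (∑ i ∈ Finset.univ.erase j, (n - v i) ^ 2)
          + ((s + 1) % n) * (2 * n - (s + 1) % n - 1) := by
      rw [Phi, sum_sq_update, hsres']
    have hPhiv : Phi n v
        = (n - v j) ^ 2 + (∑ i ∈ Finset.univ.erase j, (n - v i) ^ 2)
          + s * (2 * n - s - 1) := by
      rw [Phi, sum_split (fun i => (n - v i) ^ 2) j]
    rw [hPhiu, hPhiv]
    have hδ : n - (v j + 1) = (n - v j) - 1 := by omega
    by_cases hsn : s + 1 < n
    · rw [Nat.mod_eq_of_lt hsn, hδ]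
      have := key_up n s (n - v j) hs1 hsn (by omega) (by omega)
      omega
    · have hseq : s + 1 = n := by omega
      rw [hseq, Nat.mod_self, hδ]
      have h1 : 1 ≤ n - v j := by omega
      have hsq : ((n - v j) - 1) ^ 2 < (n - v j) ^ 2 :=
        Nat.pow_lt_pow_left (by omega) (by norm_num)
      have h2 : 1 ≤ s * (2 * n - s - 1) := by
        have : 1 ≤ 2 * n - s - 1 := by omega
        exact Nat.one_le_iff_ne_zero.mpr (by positivity)
      omega
  · -- down move
    push_neg at hle
    have hx : dnbr n v j = Function.update v j (v j - 1) := by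
      unfold dnbr; rw [if_neg (by omega)]
    have hgrid : Function.update v j (v j - 1) ∈ gridSet n d := by
      intro i
      by_cases hij : i = j
      · subst hij; simp only [Function.update_self]; omega
      · rw [Function.update_of_ne hij]; exact hv i
    have hsum' : (∑ i, Function.update v j (v j - 1) i) + 1 = ∑ i, v i := by
      rw [sum_update, sum_split v j]; omega
    have hadj : gridAdj (Function.update v j (v j - 1)) v := by
      refine ⟨j, Or.inr (by simp; omega), fun i hij => Function.update_of_ne hij _ _⟩
    have hsres' : sres n (Function.update v j (v j - 1)) = s - 1 := by
      rw [sres]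
      have : (∑ i, Function.update v j (v j - 1) i) = n * ((∑ i, v i) / n) + (s - 1) := by
        omega
      rw [this, Nat.mul_add_mod]
      exact Nat.mod_eq_of_lt (by omega)
    rw [hx]
    refine ⟨hgrid, hadj, ?_⟩
    have hPhiu : Phi n (Function.update v j (v j - 1))
        = (n - (v j - 1)) ^ 2 + (∑ i ∈ Finset.univ.erase j, (n - v i) ^ 2)
          + (s - 1) * (2 * n - (s - 1) - 1) := by
      rw [Phi, sum_sq_update, hsres']
    have hPhiv : Phi n v
        = (n - v j) ^ 2 + (∑ i ∈ Finset.univ.erase j, (n - v i) ^ 2)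
          + s * (2 * n - s - 1) := by
      rw [Phi, sum_split (fun i => (n - v i) ^ 2) j]
    rw [hPhiu, hPhiv]
    have hδ : n - (v j - 1) = (n - v j) + 1 := by omega
    rw [hδ]
    have := key_down n s (n - v j) hs1 hs2 (by omega)
    omega
/-! ### closure machinery -/

lemma subset_bpStep (n d r : ℕ) (S : Set (Fin d → ℕ)) : S ⊆ bpStep n d r S :=
  Set.subset_union_left

lemma infected_succ (n d r : ℕ) (A : Set (Fin d → ℕ)) (t : ℕ) :
    infected n d r A (t + 1) = bpStep n d r (infected n d r A t) :=
  Function.iterate_succ_apply' _ _ _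

lemma infected_mono (n d r : ℕ) (A : Set (Fin d → ℕ)) {t T : ℕ} (h : t ≤ T) :
    infected n d r A t ⊆ infected n d r A T := by
  induction T with
  | zero => simp_all
  | succ T ih =>
    rcases Nat.lt_or_ge t (T+1) with h'|h'
    · exact fun v hv => by
        rw [infected_succ]
        exact subset_bpStep _ _ _ _ (ih (by omega) hv)
    · have : t = T + 1 := by omega
      subst this; exact fun v hv => hv

lemma mem_closure_iff (n d r : ℕ) (A : Set (Fin d → ℕ)) (v : Fin d → ℕ) :
    v ∈ bpClosure n d r A ↔ ∃ t, v ∈ infected n d r A t := Set.mem_iUnion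

lemma exists_time_finset (n d r : ℕ) (A : Set (Fin d → ℕ)) (F : Finset (Fin d → ℕ))
    (h : ∀ u ∈ F, u ∈ bpClosure n d r A) : ∃ t, ∀ u ∈ F, u ∈ infected n d r A t := by
  classical
  induction F using Finset.induction with
  | empty => exact ⟨0, by simp⟩
  | insert _ _ hu ih =>
    rename_i a F'
    obtain ⟨t1, ht1⟩ := ih fun u hu' => h u (Finset.mem_insert_of_mem hu')
    obtain ⟨t2, ht2⟩ := (mem_closure_iff n d r A a).mp (h a (Finset.mem_insert_self _ _))
    refine ⟨max t1 t2, fun u hu' => ?_⟩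
    rcases Finset.mem_insert.mp hu' with rfl | hu''
    · exact infected_mono n d r A (le_max_right _ _) ht2
    · exact infected_mono n d r A (le_max_left _ _) (ht1 u hu'')

/-! ### neighbour finsets -/

def nbr {d : ℕ} (v : Fin d → ℕ) (j : Fin d) (b : Bool) : Fin d → ℕ :=
  Function.update v j (if b then v j + 1 else v j - 1)

noncomputable def nbrsF {d : ℕ} (v : Fin d → ℕ) : Finset (Fin d → ℕ) := by
  classical
  exact Finset.image (fun jb : Fin d × Bool => nbr v jb.1 jb.2) Finset.univ

lemma mem_nbrsF_of_adj {d : ℕ} {u v : Fin d → ℕ} (h : gridAdj u v) : u ∈ nbrsF v := by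
  classical
  obtain ⟨j, hor, heq⟩ := h
  unfold nbrsF
  rw [Finset.mem_image]
  rcases hor with h1 | h2
  · refine ⟨(j, true), Finset.mem_univ _, ?_⟩
    funext i
    by_cases hij : i = j
    · subst hij; simp [nbr, h1]
    · simp [nbr, Function.update_of_ne hij, heq i hij]
  · refine ⟨(j, false), Finset.mem_univ _, ?_⟩
    funext i
    by_cases hij : i = j
    · subst hij; simp only [nbr, if_neg Bool.false_ne_true, Function.update_self]
      omega
    · simp [nbr, Function.update_of_ne hij, heq i hij]

lemma adjSet_finite {d : ℕ} (v : Fin d → ℕ) (S : Set (Fin d → ℕ)) :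
    {u ∈ S | gridAdj u v}.Finite :=
  Set.Finite.subset (nbrsF v).finite_toSet (fun u hu => mem_nbrsF_of_adj hu.2)

/-- if `v` is a grid vertex with `d` infected neighbours, it gets infected -/
lemma step_of_d_nbrs {n d : ℕ} {S : Set (Fin d → ℕ)} {v : Fin d → ℕ}
    (hv : v ∈ gridSet n d) (F : Finset (Fin d → ℕ)) (hcard : d ≤ F.card)
    (hF : ∀ u ∈ F, u ∈ S ∧ gridAdj u v) : v ∈ bpStep n d d S := by
  refine Or.inr ⟨hv, ?_⟩
  have hsub : ↑F ⊆ {u ∈ S | gridAdj u v} := fun u hu => hF u hu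
  calc d ≤ F.card := hcard
    _ = (↑F : Set (Fin d → ℕ)).ncard := (Set.ncard_coe_finset F).symm
    _ ≤ {u ∈ S | gridAdj u v}.ncard :=
        Set.ncard_le_ncard hsub (adjSet_finite v S)

/-! ### the diagonal set -/

lemma mem_diag {n d : ℕ} (hn : 1 ≤ n) (hd : 1 ≤ d) {v : Fin d → ℕ}
    (hv : v ∈ gridSet n d) (hs : (∑ i, v i) % n = 0) : v ∈ diagUnion n d := by
  have hge : d ≤ ∑ i, v i := by
    calc d = ∑ _i : Fin d, 1 := by simp
      _ ≤ ∑ i, v i := Finset.sum_le_sum fun i _ => (hv i).1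
  have hle : (∑ i, v i) ≤ d * n := by
    calc (∑ i, v i) ≤ ∑ _i : Fin d, n := Finset.sum_le_sum fun i _ => (hv i).2
      _ = d * n := by simp [Finset.sum_const, Finset.card_univ, mul_comm]
  obtain ⟨k, hsum⟩ : ∃ k, ∑ i, v i = n * k := Nat.dvd_of_mod_eq_zero hs
  have hk1 : 1 ≤ k := by
    rcases Nat.eq_zero_or_pos k with h0 | h
    · subst h0; rw [Nat.mul_zero] at hsum; omega
    · exact h
  have hkd : k ≤ d := by
    refine Nat.le_of_mul_le_mul_left ?_ (show 0 < n by omega)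
    calc n * k = ∑ i, v i := hsum.symm
      _ ≤ d * n := hle
      _ = n * d := by ring
  refine Set.mem_biUnion (Finset.mem_Icc.mpr ⟨hk1, hkd⟩) ?_
  exact ⟨hv, by rw [hsum]; ring⟩

lemma dnbr_ne {n d : ℕ} {v : Fin d → ℕ} (hv : v ∈ gridSet n d) {j k : Fin d}
    (hjk : j ≠ k) : dnbr n v j ≠ dnbr n v k := by
  intro h
  have h1 : dnbr n v j j ≠ v j := by
    unfold dnbr
    by_cases hle : v j ≤ sres n v
    · rw [if_pos hle, Function.update_self]; omega
    · rw [if_neg hle, Function.update_self]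
      have := (hv j).1; omega
  have h2 : dnbr n v k j = v j := by
    unfold dnbr; exact Function.update_of_ne hjk _ _
  rw [h] at h1; exact h1 h2

/-- the diagonal set percolates -/
theorem diag_percolates {n d : ℕ} (hn : 1 ≤ n) (hd : 1 ≤ d) :
    percolates n d d (diagUnion n d) := by
  classical
  have key : ∀ N (v : Fin d → ℕ), v ∈ gridSet n d → Phi n v = N →
      v ∈ bpClosure n d d (diagUnion n d) := by
    intro N
    induction N using Nat.strong_induction_on with
    | _ N ih =>
      intro v hv hPhi
      by_cases hs : sres n v = 0
      · exact (mem_closure_iff _ _ _ _ _).mpr ⟨0, mem_diag hn hd hv hs⟩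
      · set F : Finset (Fin d → ℕ) := Finset.image (dnbr n v) Finset.univ with hF
        have hcard : F.card = d := by
          rw [hF, Finset.card_image_of_injOn, Finset.card_univ, Fintype.card_fin]
          intro j _ k _ h
          by_contra hjk
          exact dnbr_ne hv hjk h
        have hmem : ∀ u ∈ F, u ∈ bpClosure n d d (diagUnion n d) ∧ gridAdj u v := by
          intro u hu
          rw [hF, Finset.mem_image] at hu
          obtain ⟨j, _, rfl⟩ := hu
          obtain ⟨hg, ha, hp⟩ := dnbr_spec hn hv hs j
          exact ⟨ih (Phi n (dnbr n v j)) (hPhi ▸ hp) _ hg rfl, ha⟩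
        obtain ⟨t, ht⟩ := exists_time_finset n d d (diagUnion n d) F fun u hu => (hmem u hu).1
        refine (mem_closure_iff _ _ _ _ _).mpr ⟨t + 1, ?_⟩
        rw [infected_succ]
        exact step_of_d_nbrs hv F (le_of_eq hcard.symm)
          fun u hu => ⟨ht u hu, (hmem u hu).2⟩
  intro v hv
  exact key (Phi n v) v hv rfl
/-! ### cardinality of the diagonal set -/

lemma diag_eq {n d : ℕ} (hn : 1 ≤ n) (hd : 1 ≤ d) :
    diagUnion n d = {v | v ∈ gridSet n d ∧ (∑ i, v i) % n = 0} := by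
  ext v
  constructor
  · intro hv
    obtain ⟨i, hi, hvi⟩ := Set.mem_iUnion₂.mp hv
    obtain ⟨hg, hsum⟩ := hvi
    exact ⟨hg, by rw [hsum]; exact Nat.mul_mod_left i n⟩
  · intro ⟨hg, hs⟩
    exact mem_diag hn hd hg hs

def gridF (n d : ℕ) : Finset (Fin d → ℕ) :=
  Fintype.piFinset fun _ : Fin d => Finset.Icc 1 n

lemma mem_gridF {n d : ℕ} {v : Fin d → ℕ} : v ∈ gridF n d ↔ v ∈ gridSet n d := by
  simp [gridF, Fintype.mem_piFinset, gridSet, Finset.mem_Icc]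

noncomputable def diagF (n d : ℕ) : Finset (Fin d → ℕ) := by
  classical
  exact (gridF n d).filter (fun v => (∑ i, v i) % n = 0)

lemma coe_diagF {n d : ℕ} (hn : 1 ≤ n) (hd : 1 ≤ d) :
    (↑(diagF n d) : Set (Fin d → ℕ)) = diagUnion n d := by
  classical
  ext v
  rw [diag_eq hn hd]
  simp only [diagF, Finset.coe_filter, Set.mem_setOf_eq, Finset.mem_coe, mem_gridF]

lemma card_diagF {n m : ℕ} (hn : 1 ≤ n) : (diagF n (m + 1)).card = n ^ m := by
  classical
  have htarget : (Fintype.piFinset fun _ : Fin m => Finset.Icc 1 n).card = n ^ m := by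
    rw [Fintype.card_piFinset]
    simp [Nat.card_Icc]
  rw [← htarget]
  refine Finset.card_bij' (fun v _ => Fin.tail v)
    (fun x _ => Fin.cons (n - (∑ i, x i) % n) x) ?_ ?_ ?_ ?_
  · -- tail lands in target
    intro v hv
    rw [Fintype.mem_piFinset]
    intro i
    simp only [diagF, Finset.mem_filter, mem_gridF] at hv
    exact Finset.mem_Icc.mpr (hv.1 i.succ)
  · -- cons lands in diagF
    intro x hx
    rw [Fintype.mem_piFinset] at hx
    have hr : (∑ i, x i) % n < n := Nat.mod_lt _ hn
    simp only [diagF, Finset.mem_filter, mem_gridF]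
    constructor
    · intro i
      refine Fin.cases ?_ ?_ i
      · simp only [Fin.cons_zero]; omega
      · intro k
        simp only [Fin.cons_succ]
        exact Finset.mem_Icc.mp (hx k)
    · rw [Fin.sum_cons]
      have hq := Nat.div_add_mod (∑ i, x i) n
      have h9 : n - (∑ i, x i) % n + ∑ i, x i = n * ((∑ i, x i) / n) + n := by omega
      rw [h9, Nat.mul_add_mod, Nat.mod_self]
  · -- left inverse
    intro v hv
    simp only [diagF, Finset.mem_filter, mem_gridF] at hv
    obtain ⟨hg, hs⟩ := hv
    have hsplit : (∑ i, v i) = v 0 + ∑ i : Fin m, v i.succ := Fin.sum_univ_succ v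
    have htail : (∑ i : Fin m, Fin.tail v i) = ∑ i : Fin m, v i.succ := rfl
    have hv0 : v 0 = n - (∑ i : Fin m, Fin.tail v i) % n := by
      rw [htail]
      set t := ∑ i : Fin m, v i.succ with ht
      have hq := Nat.div_add_mod t n
      set q := t / n with hqdef
      set r := t % n with hrdef
      have hrn : r < n := Nat.mod_lt _ hn
      obtain ⟨Q, hQ⟩ : n ∣ v 0 + t := Nat.dvd_of_mod_eq_zero (by rw [← hsplit]; exact hs)
      have h1 : 1 ≤ v 0 := (hg 0).1
      have h2 : v 0 ≤ n := (hg 0).2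
      have hlt1 : n * q < n * Q := by omega
      have hlt2 : n * Q < n * (q + 2) := by
        have : n * (q + 2) = n * q + 2 * n := by ring
        omega
      have hq1 : q < Q := Nat.lt_of_mul_lt_mul_left hlt1
      have hq2 : Q < q + 2 := Nat.lt_of_mul_lt_mul_left hlt2
      have hQq : Q = q + 1 := by omega
      have : n * Q = n * q + n := by rw [hQq]; ring
      omega
    conv_rhs => rw [← Fin.cons_self_tail v]
    rw [hv0]
  · -- right inverse
    intro x hx
    funext i
    simp [Fin.tail, Fin.cons_succ]

lemma ncard_diagUnion {n d : ℕ} (hn : 1 ≤ n) (hd : 1 ≤ d) :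
    (diagUnion n d).ncard = n ^ (d - 1) := by
  obtain ⟨m, rfl⟩ : ∃ m, d = m + 1 := ⟨d - 1, by omega⟩
  rw [← coe_diagF hn hd, Set.ncard_coe_finset, card_diagF hn]
  simp

lemma diag_subset_grid {n d : ℕ} : diagUnion n d ⊆ gridSet n d := by
  intro v hv
  obtain ⟨i, _, hvi⟩ := Set.mem_iUnion₂.mp hv
  exact hvi.1
/-! ### perimeter machinery -/

open scoped Classical in
noncomputable def perim {d : ℕ} (S : Finset (Fin d → ℕ)) : ℕ :=
  ∑ u ∈ S, ((nbrsF u).filter (fun w => gridAdj u w ∧ w ∉ S)).card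

lemma adj_symm {d : ℕ} {u v : Fin d → ℕ} (h : gridAdj u v) : gridAdj v u := by
  obtain ⟨j, hor, heq⟩ := h
  exact ⟨j, hor.symm, fun i hij => (heq i hij).symm⟩

lemma card_nbrsF_le {d : ℕ} (v : Fin d → ℕ) : (nbrsF v).card ≤ 2 * d := by
  classical
  calc (nbrsF v).card ≤ (Finset.univ : Finset (Fin d × Bool)).card :=
        Finset.card_image_le
    _ = 2 * d := by simp [Finset.card_univ, mul_comm]

lemma card_nbrsF_grid {d : ℕ} {v : Fin d → ℕ} (hv : ∀ i, 1 ≤ v i) :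
    (nbrsF v).card = 2 * d := by
  classical
  unfold nbrsF
  rw [Finset.card_image_of_injOn, Finset.card_univ]
  · simp [mul_comm]
  · rintro ⟨j, b⟩ - ⟨k, c⟩ - h
    by_cases hjk : j = k
    · subst hjk
      by_cases hbc : b = c
    
      · simp [hbc]
      · exfalso
        have := congrFun h j
        simp only [nbr, Function.update_self] at this
        rcases b <;> rcases c <;> simp_all <;> omega
    · exfalso
      have h1 : nbr v j b j = nbr v k c j := congrFun h j
      have h2 : nbr v k c j = v j := Function.update_of_ne hjk _ _
      rw [h2] at h1
      simp only [nbr, Function.update_self] at h1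
      have h3 := hv j
      cases b <;> simp only [Bool.false_eq_true, if_false, if_true] at h1 <;> omega

lemma perim_le {d : ℕ} (S : Finset (Fin d → ℕ)) : perim S ≤ 2 * d * S.card := by
  classical
  unfold perim
  calc ∑ u ∈ S, ((nbrsF u).filter _).card ≤ ∑ _u ∈ S, 2 * d :=
        Finset.sum_le_sum fun u _ =>
          le_trans (Finset.card_filter_le _ _) (card_nbrsF_le u)
    _ = 2 * d * S.card := by rw [Finset.sum_const, smul_eq_mul, mul_comm]

open scoped Classical in
lemma double_count {d : ℕ} (S T : Finset (Fin d → ℕ)) :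
    ∑ u ∈ S, (T.filter (fun t => gridAdj u t)).card
      = ∑ t ∈ T, (S.filter (fun u => gridAdj u t)).card := by
  classical
  simp only [Finset.card_filter]
  exact Finset.sum_comm
open scoped Classical in
lemma card_pinned {n d : ℕ} (hn : 1 ≤ n) (j : Fin d) (a : ℕ) (ha : a ∈ Finset.Icc 1 n) :
    ((gridF n d).filter (fun u => u j = a)).card = n ^ (d - 1) := by
  have hset : (gridF n d).filter (fun u => u j = a)
      = Fintype.piFinset (Function.update (fun _ : Fin d => Finset.Icc 1 n) j {a}) := by
    ext u
    simp only [Finset.mem_filter, gridF, Fintype.mem_piFinset]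
    constructor
    · rintro ⟨h1, h2⟩ i
      by_cases hij : i = j
      · subst hij; rw [Function.update_self]; simp [h2]
      · rw [Function.update_of_ne hij]; exact h1 i
    · intro h
      constructor
      · intro i
        by_cases hij : i = j
        · subst hij
          have := h i
          rw [Function.update_self] at this
          simp only [Finset.mem_singleton] at this
          rw [this]; exact ha
        · have := h i; rwa [Function.update_of_ne hij] at this
      · have := h j
        rw [Function.update_self] at this
        simpa using this
  rw [hset, Fintype.card_piFinset]
  have hfun : (fun i => (Function.update (fun _ : Fin d => Finset.Icc 1 n) j ({a} : Finset ℕ) i).card)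
      = Function.update (fun _ : Fin d => n) j 1 := by
    funext i
    by_cases hij : i = j
    · subst hij; rw [Function.update_self, Function.update_self]; simp
    · rw [Function.update_of_ne hij, Function.update_of_ne hij]; simp
  rw [hfun, Finset.prod_update_of_mem (Finset.mem_univ j), one_mul]
  rw [Finset.prod_const]
  congr 1
  rw [Finset.sdiff_singleton_eq_erase, Finset.card_erase_of_mem (Finset.mem_univ j),
    Finset.card_univ, Fintype.card_fin]

open scoped Classical in
lemma sum_cnt {n d : ℕ} (hn : 1 ≤ n) (a : ℕ) (ha : a ∈ Finset.Icc 1 n) :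
    ∑ u ∈ gridF n d, (Finset.univ.filter (fun j : Fin d => u j = a)).card
      = d * n ^ (d - 1) := by
  simp only [Finset.card_filter]
  rw [Finset.sum_comm]
  have : ∀ j : Fin d, (∑ u ∈ gridF n d, if u j = a then 1 else 0) = n ^ (d - 1) := by
    intro j
    rw [← Finset.card_filter]
    exact card_pinned hn j a ha
  rw [Finset.sum_congr rfl fun j _ => this j, Finset.sum_const, Finset.card_univ,
    Fintype.card_fin, smul_eq_mul]

open scoped Classical in
lemma perim_grid {n d : ℕ} (hn : 1 ≤ n) (hd : 1 ≤ d) :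
    2 * d * n ^ (d - 1) ≤ perim (gridF n d) := by
  unfold perim
  have hterm : ∀ u ∈ gridF n d,
      (Finset.univ.filter (fun j : Fin d => u j = n)).card
        + (Finset.univ.filter (fun j : Fin d => u j = 1)).card
      ≤ ((nbrsF u).filter (fun w => gridAdj u w ∧ w ∉ gridF n d)).card := by
    intro u hu
    have hugrid : ∀ i, 1 ≤ u i ∧ u i ≤ n := mem_gridF.mp hu
    set Up : Finset (Fin d → ℕ) :=
      (Finset.univ.filter (fun j : Fin d => u j = n)).image (fun j => nbr u j true) with hUp
    set Dn : Finset (Fin d → ℕ) :=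
      (Finset.univ.filter (fun j : Fin d => u j = 1)).image (fun j => nbr u j false) with hDn
    have hUpcard : Up.card = (Finset.univ.filter (fun j : Fin d => u j = n)).card := by
      rw [hUp]
      apply Finset.card_image_of_injOn
      intro j hj k hk h
      by_contra hjk
      have h1 : nbr u j true j = nbr u k true j := congrFun h j
      simp only [nbr] at h1
      rw [Function.update_self, Function.update_of_ne hjk] at h1
      simp only [if_true] at h1
      omega
    have hDncard : Dn.card = (Finset.univ.filter (fun j : Fin d => u j = 1)).card := by
      rw [hDn]
      apply Finset.card_image_of_injOn
      intro j hj k hk h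
      by_contra hjk
      have h1 : nbr u j false j = nbr u k false j := congrFun h j
      simp only [nbr] at h1
      rw [Function.update_self, Function.update_of_ne hjk] at h1
      simp only [Bool.false_eq_true, if_false] at h1
      have hj1 : u j = 1 := (Finset.mem_filter.mp hj).2
      omega
    have hUpsub : Up ⊆ (nbrsF u).filter (fun w => gridAdj u w ∧ w ∉ gridF n d) := by
      intro w hw
      rw [hUp, Finset.mem_image] at hw
      obtain ⟨j, hj, rfl⟩ := hw
      have hjn : u j = n := (Finset.mem_filter.mp hj).2
      refine Finset.mem_filter.mpr ⟨?_, ?_, ?_⟩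
      · exact Finset.mem_image.mpr ⟨(j, true), Finset.mem_univ _, rfl⟩
      · refine ⟨j, Or.inr ?_, fun i hij => (Function.update_of_ne hij _ _).symm⟩
        simp [nbr]
      · intro hmem
        have := (mem_gridF.mp hmem j).2
        simp only [nbr, Function.update_self, if_true] at this
        omega
    have hDnsub : Dn ⊆ (nbrsF u).filter (fun w => gridAdj u w ∧ w ∉ gridF n d) := by
      intro w hw
      rw [hDn, Finset.mem_image] at hw
      obtain ⟨j, hj, rfl⟩ := hw
      have hj1 : u j = 1 := (Finset.mem_filter.mp hj).2
      refine Finset.mem_filter.mpr ⟨?_, ?_, ?_⟩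
      · exact Finset.mem_image.mpr ⟨(j, false), Finset.mem_univ _, rfl⟩
      · refine ⟨j, Or.inl ?_, fun i hij => (Function.update_of_ne hij _ _).symm⟩
        simp only [nbr, Function.update_self, Bool.false_eq_true, if_false]
        omega
      · intro hmem
        have := (mem_gridF.mp hmem j).1
        simp only [nbr, Function.update_self, Bool.false_eq_true, if_false] at this
        omega
    have hdisj : Disjoint Up Dn := by
      rw [Finset.disjoint_left]
      intro w hwUp hwDn
      rw [hUp, Finset.mem_image] at hwUp
      rw [hDn, Finset.mem_image] at hwDn
      obtain ⟨j, hj, hw1⟩ := hwUp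
      obtain ⟨k, hk, hw2⟩ := hwDn
      have hjn : u j = n := (Finset.mem_filter.mp hj).2
      have h1 : w j = n + 1 := by
        rw [← hw1]
        simp only [nbr, Function.update_self, if_true]
        omega
      have h2 : w j ≤ n := by
        rw [← hw2]
        by_cases hkj : j = k
        · subst hkj
          simp only [nbr, Function.update_self, Bool.false_eq_true, if_false]
          omega
        · rw [show nbr u k false j = u j from Function.update_of_ne hkj _ _]
          exact (hugrid j).2
      omega
    calc (Finset.univ.filter (fun j : Fin d => u j = n)).card
          + (Finset.univ.filter (fun j : Fin d => u j = 1)).card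
        = (Up ∪ Dn).card := by
          rw [Finset.card_union_of_disjoint hdisj, hUpcard, hDncard]
      _ ≤ _ := Finset.card_le_card (Finset.union_subset hUpsub hDnsub)
  calc 2 * d * n ^ (d - 1) = d * n ^ (d - 1) + d * n ^ (d - 1) := by ring
    _ = ∑ u ∈ gridF n d, ((Finset.univ.filter (fun j : Fin d => u j = n)).card
          + (Finset.univ.filter (fun j : Fin d => u j = 1)).card) := by
        rw [Finset.sum_add_distrib, sum_cnt hn n (by simp [hn]), sum_cnt hn 1 (by simp [hn])]
    _ ≤ _ := Finset.sum_le_sum hterm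
open scoped Classical in
/-- key perimeter monotonicity: adding vertices each with ≥ d infected neighbours
does not increase the perimeter -/
lemma perim_step {n d : ℕ} (S T : Finset (Fin d → ℕ)) (hdisj : Disjoint S T)
    (hT : ∀ t ∈ T, t ∈ gridSet n d)
    (hdeg : ∀ t ∈ T, d ≤ (S.filter (fun u => gridAdj u t)).card) :
    perim (S ∪ T) ≤ perim S := by
  unfold perim
  rw [Finset.sum_union hdisj]
  -- split the S-terms of perim S
  have hsplit : ∀ u : Fin d → ℕ,
      ((nbrsF u).filter (fun w => gridAdj u w ∧ w ∉ S)).card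
        = ((nbrsF u).filter (fun w => gridAdj u w ∧ w ∉ S ∪ T)).card
          + ((nbrsF u).filter (fun w => gridAdj u w ∧ w ∈ T)).card := by
    intro u
    have hbase := Finset.card_filter_add_card_filter_not
      (s := (nbrsF u).filter (fun w => gridAdj u w ∧ w ∉ S)) (p := fun w => w ∈ T)
    rw [Finset.filter_filter, Finset.filter_filter] at hbase
    have h1 : ((nbrsF u).filter (fun w => (gridAdj u w ∧ w ∉ S) ∧ w ∈ T))
        = (nbrsF u).filter (fun w => gridAdj u w ∧ w ∈ T) := by
      apply Finset.filter_congr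
      intro w _
      constructor
      · rintro ⟨⟨h1, _⟩, h2⟩; exact ⟨h1, h2⟩
      · rintro ⟨h1, h2⟩
        exact ⟨⟨h1, fun hS => (Finset.disjoint_left.mp hdisj) hS h2⟩, h2⟩
    have h2 : ((nbrsF u).filter (fun w => (gridAdj u w ∧ w ∉ S) ∧ ¬ w ∈ T))
        = (nbrsF u).filter (fun w => gridAdj u w ∧ w ∉ S ∪ T) := by
      apply Finset.filter_congr
      intro w _
      simp only [Finset.mem_union]
      tauto
    rw [h1, h2] at hbase
    omega
  -- for t ∈ T
  have hTbound : ∀ t ∈ T,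
      ((nbrsF t).filter (fun w => gridAdj t w ∧ w ∉ S ∪ T)).card
        + (S.filter (fun u => gridAdj u t)).card ≤ 2 * d := by
    intro t ht
    have hSfilter : S.filter (fun u => gridAdj u t)
        = (nbrsF t).filter (fun w => gridAdj t w ∧ w ∈ S) := by
      ext u
      simp only [Finset.mem_filter]
      constructor
      · rintro ⟨hu, ha⟩
        exact ⟨mem_nbrsF_of_adj ha, adj_symm ha, hu⟩
      · rintro ⟨_, ha, hu⟩
        exact ⟨hu, adj_symm ha⟩
    rw [hSfilter]
    have hdisj2 : Disjoint ((nbrsF t).filter (fun w => gridAdj t w ∧ w ∉ S ∪ T))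
        ((nbrsF t).filter (fun w => gridAdj t w ∧ w ∈ S)) := by
      rw [Finset.disjoint_left]
      rintro w hw1 hw2
      have h1 := (Finset.mem_filter.mp hw1).2.2
      have h2 := (Finset.mem_filter.mp hw2).2.2
      exact h1 (Finset.mem_union_left _ h2)
    calc _ = (((nbrsF t).filter (fun w => gridAdj t w ∧ w ∉ S ∪ T))
          ∪ ((nbrsF t).filter (fun w => gridAdj t w ∧ w ∈ S))).card :=
          (Finset.card_union_of_disjoint hdisj2).symm
      _ ≤ (nbrsF t).card := Finset.card_le_card
          (Finset.union_subset (Finset.filter_subset _ _) (Finset.filter_subset _ _))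
      _ = 2 * d := card_nbrsF_grid (fun i => ((hT t ht) i).1)
  -- e(u) in T-filter form
  have heu : ∀ u : Fin d → ℕ,
      ((nbrsF u).filter (fun w => gridAdj u w ∧ w ∈ T)).card
        = (T.filter (fun t => gridAdj u t)).card := by
    intro u
    congr 1
    ext w
    simp only [Finset.mem_filter]
    constructor
    · rintro ⟨_, ha, hw⟩; exact ⟨hw, ha⟩
    · rintro ⟨hw, ha⟩; exact ⟨mem_nbrsF_of_adj (adj_symm ha), ha, hw⟩
  -- assemble
  set A := ∑ u ∈ S, ((nbrsF u).filter (fun w => gridAdj u w ∧ w ∉ S ∪ T)).card with hA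
  set B := ∑ t ∈ T, ((nbrsF t).filter (fun w => gridAdj t w ∧ w ∉ S ∪ T)).card with hB
  set E := ∑ t ∈ T, (S.filter (fun u => gridAdj u t)).card with hE
  have hps : ∑ u ∈ S, ((nbrsF u).filter (fun w => gridAdj u w ∧ w ∉ S)).card = A + E := by
    rw [Finset.sum_congr rfl fun u _ => hsplit u, Finset.sum_add_distrib]
    congr 1
    rw [Finset.sum_congr rfl fun u (_ : u ∈ S) => heu u]
    exact double_count S T
  have hBE : B + E ≤ 2 * d * T.card := by
    rw [hB, hE, ← Finset.sum_add_distrib]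
    calc ∑ t ∈ T, _ ≤ ∑ _t ∈ T, 2 * d := Finset.sum_le_sum hTbound
      _ = 2 * d * T.card := by rw [Finset.sum_const, smul_eq_mul, mul_comm]
  have hEd : d * T.card ≤ E := by
    rw [hE]
    calc d * T.card = T.card * d := by ring
      _ = ∑ _t ∈ T, d := by rw [Finset.sum_const, smul_eq_mul]
      _ ≤ E := Finset.sum_le_sum hdeg
  have hbridge : 2 * d * T.card = d * T.card + d * T.card := by ring
  rw [hps]
  omega
/-! ### the lower bound -/

lemma infected_subset_grid {n d r : ℕ} {A : Set (Fin d → ℕ)} (hA : A ⊆ gridSet n d) :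
    ∀ t, infected n d r A t ⊆ gridSet n d := by
  intro t
  induction t with
  | zero => exact hA
  | succ t ih =>
    rw [infected_succ]
    rintro v (hv | ⟨hg, -⟩)
    · exact ih hv
    · exact hg

open scoped Classical in
lemma lower_bound {n d : ℕ} (hn : 1 ≤ n) (hd : 1 ≤ d) {A : Set (Fin d → ℕ)}
    (hA : A ⊆ gridSet n d) (hperc : percolates n d d A) : n ^ (d - 1) ≤ A.ncard := by
  have hgridfin : (gridSet n d).Finite :=
    Set.Finite.ofFinset (gridF n d) (fun v => mem_gridF)
  have hinf := infected_subset_grid (n := n) (d := d) (r := d) (A := A) hA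
  have hfin : ∀ t, (infected n d d A t).Finite := fun t => hgridfin.subset (hinf t)
  set St : ℕ → Finset (Fin d → ℕ) := fun t => (hfin t).toFinset with hSt
  have hmemSt : ∀ t v, v ∈ St t ↔ v ∈ infected n d d A t := by
    intro t v; rw [hSt]; exact Set.Finite.mem_toFinset _
  have hmono : ∀ t, St t ⊆ St (t + 1) := by
    intro t v hv
    rw [hmemSt] at *
    exact infected_mono n d d A (Nat.le_succ t) hv
  -- one-step perimeter monotonicity
  have hstep : ∀ t, perim (St (t + 1)) ≤ perim (St t) := by
    intro t
    have hunion : St t ∪ (St (t + 1) \ St t) = St (t + 1) :=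
      Finset.union_sdiff_of_subset (hmono t)
    rw [← hunion]
    apply perim_step (n := n)
    · exact Finset.disjoint_sdiff
    · intro x hx
      have hx1 : x ∈ infected n d d A (t + 1) :=
        (hmemSt _ _).mp (Finset.mem_sdiff.mp hx).1
      exact hinf (t + 1) hx1
    · intro x hx
      obtain ⟨hx1, hx2⟩ := Finset.mem_sdiff.mp hx
      have hx3 : x ∈ bpStep n d d (infected n d d A t) := by
        rw [← infected_succ]; exact (hmemSt _ _).mp hx1
      rcases hx3 with hx4 | ⟨-, hcard⟩
      · exact absurd ((hmemSt _ _).mpr hx4) hx2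
      · have hseteq : {u ∈ infected n d d A t | gridAdj u x}
            = ↑((St t).filter (fun u => gridAdj u x)) := by
          ext u
          simp only [Set.mem_setOf_eq, Finset.coe_filter, hmemSt]
        rwa [hseteq, Set.ncard_coe_finset] at hcard
  have hchain : ∀ t, perim (St t) ≤ perim (St 0) := by
    intro t
    induction t with
    | zero => exact le_refl _
    | succ t ih => exact le_trans (hstep t) ih
  -- the grid is reached at some time
  obtain ⟨Tf, hTf⟩ := exists_time_finset n d d A (gridF n d)
    (fun u hu => hperc (mem_gridF.mp hu))
  have hgrideq : infected n d d A Tf = gridSet n d :=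
    Set.Subset.antisymm (hinf Tf) (fun v hv => hTf v (mem_gridF.mpr hv))
  have hStTf : St Tf = gridF n d := by
    ext v
    rw [hmemSt, hgrideq, mem_gridF]
  -- initial set
  have hAfin : A.Finite := hgridfin.subset hA
  have hSt0 : St 0 = hAfin.toFinset := by
    ext v
    rw [hmemSt]
    exact (Set.Finite.mem_toFinset hAfin).symm
  have hfinal : 2 * d * n ^ (d - 1) ≤ 2 * d * A.ncard := by
    calc 2 * d * n ^ (d - 1) ≤ perim (gridF n d) := perim_grid hn hd
      _ = perim (St Tf) := by rw [hStTf]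
      _ ≤ perim (St 0) := hchain Tf
      _ ≤ 2 * d * (St 0).card := perim_le _
      _ = 2 * d * A.ncard := by
          rw [hSt0, Set.ncard_eq_toFinset_card A hAfin]
  exact Nat.le_of_mul_le_mul_left hfinal (by omega)
end SPS

theorem smallest_percolating_set (n d : ℕ) (hn : 1 ≤ n) (hd : 1 ≤ d) :
    IsLeast {k : ℕ | ∃ A : Set (Fin d → ℕ),
      A ⊆ gridSet n d ∧ percolates n d d A ∧ A.ncard = k} (n ^ (d - 1)) := by
  constructor
  · exact ⟨diagUnion n d, SPS.diag_subset_grid, SPS.diag_percolates hn hd,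
      SPS.ncard_diagUnion hn hd⟩
  · rintro k ⟨A, hA, hperc, rfl⟩
    exact SPS.lower_bound hn hd hA hperc
end

section
/- Let d ≥ 1 and n ≥ 1, and suppose V_{(⌈d/n⌉-1)n} ∩ [n]^d = ∅ (i.e., no vertex of [n]^d has coordinate sum (⌈d/n⌉-1)n). If the hyperplane V_{⌈d/n⌉ n} is infected, then in d-neighbour bootstrap percolation all vertices of [n]^d with coordinate sum strictly less than ⌈d/n⌉ n become infected; moreover, every vertex in V_{⌈d/n⌉ n - j} becomes infected within j steps. -/
lemma adj_finite {d : ℕ} (v : Fin d → ℕ) : {u | gridAdj u v}.Finite := by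
  apply Set.Finite.subset (Set.finite_range
    (fun p : Fin d × Bool => Function.update v p.1 (if p.2 then v p.1 + 1 else v p.1 - 1)))
  rintro u ⟨j, hj, hoth⟩
  rcases hj with h | h
  · exact ⟨(j, true), by funext i; by_cases hij : i = j <;>
      simp [hij, Function.update, h, (hoth i ·)]⟩
  · exact ⟨(j, false), by funext i; by_cases hij : i = j <;>
      simp [hij, Function.update, (hoth i ·)] <;> omega⟩

lemma sum_ge {n d : ℕ} {v : Fin d → ℕ} (hv : v ∈ gridSet n d) : d ≤ ∑ i, v i := by
  calc d = ∑ _i : Fin d, 1 := by simp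
  _ ≤ ∑ i, v i := Finset.sum_le_sum fun i _ => (hv i).1

theorem bottom_corner (n d : ℕ) (hn : 1 ≤ n) (hd : 1 ≤ d)
    (hempty : hyperplane n d (((d + n - 1) / n - 1) * n) = ∅) :
    (∀ v ∈ gridSet n d, (∑ i, v i) < ((d + n - 1) / n) * n →
      v ∈ bpClosure n d d (hyperplane n d (((d + n - 1) / n) * n))) ∧
    (∀ j : ℕ, ∀ v ∈ gridSet n d, (∑ i, v i) = ((d + n - 1) / n) * n - j →
      v ∈ infected n d d (hyperplane n d (((d + n - 1) / n) * n)) j) := by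
  set m : ℕ := (d + n - 1) / n with hm
  have hmn1 : m * n ≤ d + n - 1 := Nat.div_mul_le_self _ _
  have hmn2 : d + n - 1 < m * n + n := by
    have h1 := Nat.div_add_mod (d + n - 1) n
    rw [← hm] at h1
    have h2 := Nat.mod_lt (d + n - 1) hn
    have h3 : n * m = m * n := Nat.mul_comm _ _
    omega
  have key : ∀ j : ℕ, ∀ v ∈ gridSet n d, (∑ i, v i) = m * n - j →
      v ∈ infected n d d (hyperplane n d (m * n)) j := by
    intro j
    induction j with
    | zero =>
      intro v hv hsum
      exact ⟨hv, by simpa using hsum⟩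
    | succ j ih =>
      intro v hv hsum
      have hdle : d ≤ ∑ i, v i := sum_ge hv
      have hjlt : j < m * n := by omega
      have hsum' : ∑ i, v i = m * n - (j + 1) := hsum
      -- every coordinate is < n
      have hlt : ∀ i, v i < n := by
        intro i
        by_contra hcon
        have hvi : v i = n := by have := (hv i).2; omega
        have h1 : ∑ i', v i' = v i + ∑ i' ∈ Finset.univ.erase i, v i' :=
          (Finset.add_sum_erase _ v (Finset.mem_univ i)).symm
        have h2 : (Finset.univ.erase i).card * 1 ≤ ∑ i' ∈ Finset.univ.erase i, v i' :=
          Finset.card_nsmul_le_sum _ _ _ fun i' hi' => ((hv i').1)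
        have h3 : (Finset.univ.erase i).card = d - 1 := by
          rw [Finset.card_erase_of_mem (Finset.mem_univ i)]; simp
        omega
      -- the up-neighbours
      set f : Fin d → (Fin d → ℕ) := fun i => Function.update v i (v i + 1) with hf
      have hfsum : ∀ i, ∑ i', f i i' = (∑ i', v i') + 1 := by
        intro i
        rw [hf]
        rw [Finset.sum_update_of_mem (Finset.mem_univ i), Finset.sdiff_singleton_eq_erase,
          ← Finset.add_sum_erase _ v (Finset.mem_univ i)]
        omega
      have hfgrid : ∀ i, f i ∈ gridSet n d := by
        intro i i'
        by_cases hii : i' = i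
        · subst hii; simp [hf]; exact hlt i'
        · simp [hf, Function.update_of_ne hii]; exact hv i'
      have hfmem : ∀ i, f i ∈ infected n d d (hyperplane n d (m * n)) j := by
        intro i
        apply ih _ (hfgrid i)
        rw [hfsum i, hsum']
        omega
      have hfadj : ∀ i, gridAdj (f i) v := by
        intro i
        refine ⟨i, Or.inl (by simp [hf]), fun i' hi' => ?_⟩
        simp [hf, Function.update_of_ne hi']
      have hfinj : Function.Injective f := by
        intro i i' hii
        by_contra hne
        have := congrFun hii i
        rw [hf] at this
        simp only [Function.update_self, Function.update_of_ne hne] at this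
        omega
      -- count
      have hcard : d ≤ {u ∈ infected n d d (hyperplane n d (m * n)) j | gridAdj u v}.ncard := by
        have hsub : ↑(Finset.univ.image f) ⊆
            {u ∈ infected n d d (hyperplane n d (m * n)) j | gridAdj u v} := by
          intro u hu
          simp only [Finset.coe_image, Set.mem_image] at hu
          obtain ⟨i, _, rfl⟩ := hu
          exact ⟨hfmem i, hfadj i⟩
        have hfin : {u ∈ infected n d d (hyperplane n d (m * n)) j | gridAdj u v}.Finite :=
          (adj_finite v).subset fun u hu => hu.2
        calc d = (Finset.univ.image f).card := by
              rw [Finset.card_image_of_injective _ hfinj]; simp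
        _ = (↑(Finset.univ.image f) : Set _).ncard := (Set.ncard_coe_finset _).symm
        _ ≤ _ := Set.ncard_le_ncard hsub hfin
      show v ∈ infected n d d (hyperplane n d (m * n)) (j + 1)
      rw [infected, Function.iterate_succ_apply']
      exact Or.inr ⟨hv, hcard⟩
  refine ⟨?_, key⟩
  intro v hv hlt
  have hdle : d ≤ ∑ i, v i := sum_ge hv
  exact Set.mem_iUnion.mpr ⟨m * n - ∑ i, v i, key _ v hv (by omega)⟩
end

section
/- Fix n, d, s with 1 + ⌈d/n⌉ ≤ s ≤ d, let F_s = ⋃_{i=1}^{n-1} V_{(s-1)n+i}, and for v ∈ F_s define t_v = Σ v_i − (s−1)n and Pre(v) = {v + e_j : v_j ≤ t_v} ∪ {v − e_j : v_j > t_v}. Then there is no finite sequence u^1, ..., u^m, u^{m+1} = u^1 with m ≥ 1, all u^i ∈ F_s, and u^{i+1} ∈ Pre(u^i) for all 1 ≤ i ≤ m. Equivalently, the directed relation u → w for w ∈ Pre(u) restricted to F_s is acyclic. -/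
/-- The slab `F_s = ⋃_{i=1}^{n-1} V_{(s-1)n+i}`. -/
def Fs (n d s : ℕ) : Set (Fin d → ℕ) :=
  ⋃ i ∈ Finset.Icc 1 (n - 1), hyperplane n d ((s - 1) * n + i)

/-- `t_v = Σ v_i − (s−1)n`. -/
def tv (n s : ℕ) {d : ℕ} (v : Fin d → ℕ) : ℕ := (∑ i, v i) - (s - 1) * n

/-- The `j`-th standard basis vector. -/
def eVec (d : ℕ) (j : Fin d) : Fin d → ℕ := fun i => if i = j then 1 else 0

/-- `Pre(v) = {v + e_j : v_j ≤ t_v} ∪ {v − e_j : v_j > t_v}`. -/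
def Pre (n s : ℕ) {d : ℕ} (v : Fin d → ℕ) : Set (Fin d → ℕ) :=
  {w | ∃ j, (v j ≤ tv n s v ∧ w = v + eVec d j) ∨ (tv n s v < v j ∧ w = v - eVec d j)}

/-- Coordinate sum, in `ℤ`. -/
def Ssum {d : ℕ} (v : Fin d → ℕ) : ℤ := ∑ k, (v k : ℤ)

/-- Sum of squares of coordinates, in `ℤ`. -/
def Qsum {d : ℕ} (v : Fin d → ℕ) : ℤ := ∑ k, (v k : ℤ) ^ 2

/-- The potential function. -/
def Theta (n s : ℕ) {d : ℕ} (v : Fin d → ℕ) : ℤ :=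
  Qsum v - (Ssum v - ((s - 1) * n : ℕ)) ^ 2

lemma sum_diff_single' {d : ℕ} (g h : Fin d → ℤ) (j : Fin d)
    (hk : ∀ k, k ≠ j → g k = h k) : (∑ k, g k) - (∑ k, h k) = g j - h j := by
  rw [← Finset.sum_sub_distrib]
  exact Finset.sum_eq_single_of_mem j (Finset.mem_univ j)
    (fun k _ hkj => by rw [hk k hkj]; ring)

lemma step_lemma {n d s : ℕ} {v w : Fin d → ℕ} (hv : v ∈ Fs n d s)
    (hw : w ∈ Pre n s v) :
    (Ssum w = Ssum v + 1 ∧ Theta n s w ≤ Theta n s v) ∨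
      Theta n s w ≤ Theta n s v - 2 := by
  obtain ⟨_hgrid, a, ha1, _ha2, hsum⟩ :
      v ∈ gridSet n d ∧ ∃ a, 1 ≤ a ∧ a ≤ n - 1 ∧
        ∑ k, v k = (s - 1) * n + a := by
    simpa [Fs, hyperplane, Set.mem_iUnion, Set.mem_setOf_eq, Finset.mem_Icc,
      and_assoc] using hv
  have htv : tv n s v = a := by simp [tv, hsum]
  have hSa : Ssum v = ((s - 1) * n : ℕ) + a := by
    have : Ssum v = ((∑ k, v k : ℕ) : ℤ) := by rw [Ssum]; push_cast; ring
    rw [this, hsum]; push_cast; ring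
  obtain ⟨j, hj⟩ := hw
  rcases hj with ⟨hle, hwe⟩ | ⟨hgt, hwe⟩
  · -- plus step
    rw [htv] at hle
    have hne : ∀ k, k ≠ j → w k = v k := by
      intro k hk; rw [hwe]; simp [eVec, Pi.add_apply, hk]
    have hjv : (w j : ℤ) = (v j : ℤ) + 1 := by
      rw [hwe]; simp [eVec, Pi.add_apply]
    have hSd : Ssum w - Ssum v = 1 := by
      have h0 := sum_diff_single' (fun k => (w k : ℤ)) (fun k => (v k : ℤ)) j
        (fun k hk => by rw [hne k hk])
      rw [Ssum, Ssum, h0, hjv]; ring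
    have hva : (v j : ℤ) ≤ a := by exact_mod_cast hle
    have hQd : Qsum w - Qsum v ≤ 2 * a + 1 := by
      have h2 := sum_diff_single' (fun k => (w k : ℤ) ^ 2)
        (fun k => (v k : ℤ) ^ 2) j (fun k hk => by rw [hne k hk])
      rw [Qsum, Qsum, h2, hjv]; nlinarith
    left
    refine ⟨by linarith, ?_⟩
    have hS1 : Ssum w = Ssum v + 1 := by linarith
    rw [Theta, Theta, hS1, hSa]
    nlinarith [hQd]
  · -- minus step
    rw [htv] at hgt
    have hne : ∀ k, k ≠ j → w k = v k := by
      intro k hk; rw [hwe]; simp [eVec, Pi.sub_apply, hk]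
    have hjv : (w j : ℤ) = (v j : ℤ) - 1 := by
      have h1 : 1 ≤ v j := by omega
      have h2 : w j = v j - 1 := by rw [hwe]; simp [eVec, Pi.sub_apply]
      rw [h2]; omega
    have hSd : Ssum w - Ssum v = -1 := by
      have h0 := sum_diff_single' (fun k => (w k : ℤ)) (fun k => (v k : ℤ)) j
        (fun k hk => by rw [hne k hk])
      rw [Ssum, Ssum, h0, hjv]; ring
    have hva : (a : ℤ) + 1 ≤ (v j : ℤ) := by exact_mod_cast hgt
    have hQd : Qsum w - Qsum v ≤ -(2 * a) - 1 := by
      have h2 := sum_diff_single' (fun k => (w k : ℤ) ^ 2)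
        (fun k => (v k : ℤ) ^ 2) j (fun k hk => by rw [hne k hk])
      rw [Qsum, Qsum, h2, hjv]; nlinarith
    right
    have hS1 : Ssum w = Ssum v - 1 := by linarith
    rw [Theta, Theta, hS1, hSa]
    nlinarith [hQd]

theorem Pre_acyclic (n d s : ℕ) (hn : 1 ≤ n)
    (hs1 : 1 + (d + n - 1) / n ≤ s) (hs2 : s ≤ d) :
    ¬ ∃ (m : ℕ) (u : ℕ → (Fin d → ℕ)), 1 ≤ m ∧
      (∀ i < m, u i ∈ Fs n d s) ∧
      (∀ i < m, u (i + 1) ∈ Pre n s (u i)) ∧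
      u m = u 0 := by
  rintro ⟨m, u, hm, hF, hP, hcyc⟩
  have hstep : ∀ i, i < m →
      (Ssum (u (i + 1)) = Ssum (u i) + 1 ∧
        Theta n s (u (i + 1)) ≤ Theta n s (u i)) ∨
      Theta n s (u (i + 1)) ≤ Theta n s (u i) - 2 :=
    fun i him => step_lemma (hF i him) (hP i him)
  have hmono : ∀ j, j ≤ m → ∀ i, i ≤ j → Theta n s (u j) ≤ Theta n s (u i) := by
    intro j
    induction j with
    | zero => intro _ i hi; simp [Nat.le_zero.mp hi]
    | succ k ih =>
      intro hk i hi
      have hk' : k < m := by omega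
      have h1 : Theta n s (u (k + 1)) ≤ Theta n s (u k) := by
        rcases hstep k hk' with ⟨_, h⟩ | h
        · exact h
        · linarith
      rcases Nat.eq_or_lt_of_le hi with he | hlt
      · rw [he]
      · exact le_trans h1 (ih (by omega) i (by omega))
  have hΘm : Theta n s (u m) = Theta n s (u 0) := by rw [hcyc]
  have hup : ∀ i, i < m → Ssum (u (i + 1)) = Ssum (u i) + 1 := by
    intro i him
    rcases hstep i him with ⟨h1, _⟩ | h2
    · exact h1
    · exfalso
      have e1 : Theta n s (u i) ≤ Theta n s (u 0) := hmono i (by omega) 0 (by omega)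
      have e2 : Theta n s (u m) ≤ Theta n s (u (i + 1)) :=
        hmono m (le_refl m) (i + 1) (by omega)
      linarith [hΘm]
  have hSm : ∀ i, i ≤ m → Ssum (u i) = Ssum (u 0) + i := by
    intro i
    induction i with
    | zero => intro _; simp
    | succ k ih =>
      intro hk
      rw [hup k (by omega), ih (by omega)]
      push_cast; ring
  have h1 : Ssum (u m) = Ssum (u 0) := by rw [hcyc]
  have h2 := hSm m (le_refl m)
  omega
end

section
/- Fix n, d, s with 1 + ⌈d/n⌉ ≤ s ≤ d, and suppose all vertices of V_{(s-1)n} ∪ V_{sn} are infected. Then in d-neighbour bootstrap percolation every vertex of F_s = ⋃_{i=1}^{n-1} V_{(s-1)n+i} eventually becomes infected. -/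
/- ----------------- auxiliary machinery ----------------- -/

lemma infected_succ (n d r : ℕ) (A : Set (Fin d → ℕ)) (t : ℕ) :
    infected n d r A (t + 1) = bpStep n d r (infected n d r A t) :=
  Function.iterate_succ_apply' _ _ _

lemma infected_mono (n d r : ℕ) (A : Set (Fin d → ℕ)) {t t' : ℕ} (h : t ≤ t') :
    infected n d r A t ⊆ infected n d r A t' := by
  induction t' with
  | zero =>
    have : t = 0 := Nat.le_zero.1 h
    subst this; exact subset_rfl
  | succ m ih =>
    rcases Nat.lt_or_ge t (m + 1) with h' | h'
    · refine (ih (Nat.lt_succ_iff.1 h')).trans ?_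
      rw [infected_succ]; exact Set.subset_union_left
    · have : t = m + 1 := le_antisymm h h'
      subst this; exact subset_rfl

/-- If `v` is a grid vertex with `d` distinct already-eventually-infected
neighbours, then `v` is eventually infected. -/
lemma closure_step {n d : ℕ} {A : Set (Fin d → ℕ)} {v : Fin d → ℕ}
    (hv : v ∈ gridSet n d) (g : Fin d → (Fin d → ℕ))
    (hinj : Function.Injective g)
    (hadj : ∀ j, gridAdj (g j) v)
    (hcl : ∀ j, g j ∈ bpClosure n d d A) :
    v ∈ bpClosure n d d A := by
  classical
  choose f hf using fun j => Set.mem_iUnion.1 (hcl j)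
  set T := Finset.univ.sup f with hT
  have hmem : ∀ j, g j ∈ infected n d d A T := fun j =>
    infected_mono n d d A (Finset.le_sup (Finset.mem_univ j)) (hf j)
  have hfin : ({u | gridAdj u v} : Set (Fin d → ℕ)).Finite := by
    apply Set.Finite.subset (Set.finite_range (fun p : Fin d × Bool =>
      if p.2 then v + eVec d p.1 else v - eVec d p.1))
    rintro u ⟨j, hj, hoff⟩
    rcases hj with hj | hj
    · refine ⟨(j, true), ?_⟩
      funext k
      by_cases hk : k = j
      · subst hk; simp [eVec, hj]
      · simp [eVec, hk, hoff k hk]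
    · refine ⟨(j, false), ?_⟩
      funext k
      by_cases hk : k = j
      · subst hk; simp [eVec]; omega
      · simp [eVec, hk, hoff k hk]
  have hsub : Set.range g ⊆ {u ∈ infected n d d A T | gridAdj u v} := by
    rintro _ ⟨j, rfl⟩; exact ⟨hmem j, hadj j⟩
  have hfin2 : ({u ∈ infected n d d A T | gridAdj u v}).Finite :=
    hfin.subset (fun u hu => hu.2)
  have hcard : d ≤ {u ∈ infected n d d A T | gridAdj u v}.ncard := by
    have h1 : (Set.range g).ncard = d := by
      rw [← Set.image_univ, Set.ncard_image_of_injective _ hinj, Set.ncard_univ,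
        Nat.card_eq_fintype_card, Fintype.card_fin]
    have h2 := Set.ncard_le_ncard hsub hfin2
    omega
  have hstep : v ∈ infected n d d A (T + 1) := by
    rw [infected_succ]
    exact Or.inr ⟨hv, hcard⟩
  exact Set.mem_iUnion.2 ⟨T + 1, hstep⟩

/-- The potential function: `Σ (2 v_i − n)² + 4 t (n − 1 − t)`. -/
def muZ (n : ℕ) {d : ℕ} (v : Fin d → ℕ) (t : ℕ) : ℤ :=
  (∑ k, (2 * (v k : ℤ) - n) ^ 2) + 4 * t * ((n : ℤ) - 1 - t)

lemma sum_shift {d : ℕ} (f g : Fin d → ℤ) (j : Fin d) (h : ∀ k, k ≠ j → g k = f k) :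
    ∑ k, g k = ∑ k, f k + (g j - f j) := by
  classical
  rw [Finset.sum_eq_sum_sdiff_singleton_add (Finset.mem_univ j) g,
    Finset.sum_eq_sum_sdiff_singleton_add (Finset.mem_univ j) f,
    Finset.sum_congr rfl (fun k hk => h k (by simpa using (Finset.mem_sdiff.1 hk).2))]
  ring

lemma muZ_nonneg (n : ℕ) {d : ℕ} (v : Fin d → ℕ) (t : ℕ) (ht : t ≤ n - 1) (hn : 1 ≤ n) :
    0 ≤ muZ n v t := by
  have h1 : (0 : ℤ) ≤ ∑ k, (2 * (v k : ℤ) - n) ^ 2 :=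
    Finset.sum_nonneg fun k _ => sq_nonneg _
  have h2 : (t : ℤ) ≤ (n : ℤ) - 1 := by
    have : t ≤ n - 1 := ht
    omega
  have h3 : (0 : ℤ) ≤ 4 * t * ((n : ℤ) - 1 - t) := by
    have h4 : (0 : ℤ) ≤ (t : ℤ) := Int.ofNat_nonneg t
    nlinarith
  unfold muZ; linarith

lemma muZ_plus (n : ℕ) {d : ℕ} (v : Fin d → ℕ) (i : ℕ) (j : Fin d) (hvj : v j ≤ i) :
    muZ n (v + eVec d j) (i + 1) ≤ muZ n v i - 4 := by
  classical
  set w := v + eVec d j with hw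
  have hoff : ∀ k, k ≠ j → (2 * (w k : ℤ) - n) ^ 2 = (2 * (v k : ℤ) - n) ^ 2 := by
    intro k hk
    have : w k = v k := by simp [hw, eVec, Pi.add_apply, hk]
    rw [this]
  have hj : (w j : ℤ) = (v j : ℤ) + 1 := by
    have : w j = v j + 1 := by simp [hw, eVec, Pi.add_apply]
    rw [this]; push_cast; ring
  have hsum := sum_shift (fun k => (2 * (v k : ℤ) - n) ^ 2)
    (fun k => (2 * (w k : ℤ) - n) ^ 2) j hoff
  have key : muZ n w (i + 1) = muZ n v i + 8 * (v j : ℤ) - 4 - 8 * i := by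
    unfold muZ
    rw [hsum]
    simp only [hj]
    push_cast
    ring
  have hle : (v j : ℤ) ≤ (i : ℤ) := by exact_mod_cast hvj
  linarith [key]

lemma muZ_minus (n : ℕ) {d : ℕ} (v : Fin d → ℕ) (i : ℕ) (j : Fin d)
    (hvj : i < v j) (hi : 1 ≤ i) :
    muZ n (v - eVec d j) (i - 1) ≤ muZ n v i - 4 := by
  classical
  set w := v - eVec d j with hw
  have hoff : ∀ k, k ≠ j → (2 * (w k : ℤ) - n) ^ 2 = (2 * (v k : ℤ) - n) ^ 2 := by
    intro k hk
    have : w k = v k := by simp [hw, eVec, Pi.sub_apply, hk]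
    rw [this]
  have hvj1 : 1 ≤ v j := by omega
  have hj : (w j : ℤ) = (v j : ℤ) - 1 := by
    have h1 : w j = v j - 1 := by simp [hw, eVec, Pi.sub_apply]
    rw [h1]; omega
  have hsum := sum_shift (fun k => (2 * (v k : ℤ) - n) ^ 2)
    (fun k => (2 * (w k : ℤ) - n) ^ 2) j hoff
  have hi' : ((i - 1 : ℕ) : ℤ) = (i : ℤ) - 1 := by omega
  have key : muZ n w (i - 1) = muZ n v i + 4 + 8 * (i : ℤ) - 8 * (v j : ℤ) := by
    unfold muZ
    rw [hsum]
    simp only [hj, hi']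
    push_cast
    ring
  have hle : (i : ℤ) + 1 ≤ (v j : ℤ) := by exact_mod_cast hvj
  linarith [key]

theorem slab_infected (n d s : ℕ) (hn : 1 ≤ n)
    (hs1 : 1 + (d + n - 1) / n ≤ s) (hs2 : s ≤ d) :
    Fs n d s ⊆
      bpClosure n d d (hyperplane n d ((s - 1) * n) ∪ hyperplane n d (s * n)) := by
  classical
  have hs : 1 ≤ s := le_trans (Nat.le_add_right 1 _) hs1
  set A := hyperplane n d ((s - 1) * n) ∪ hyperplane n d (s * n) with hA
  have hA0 : A ⊆ bpClosure n d d A := fun u hu => Set.mem_iUnion.2 ⟨0, hu⟩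
  have hsn : (s - 1) * n + n = s * n := by
    have h1 : (s - 1) * n = s * n - n := by rw [Nat.sub_one_mul]
    have h2 : n ≤ s * n := Nat.le_mul_of_pos_left n hs
    omega
  suffices H : ∀ N : ℕ, ∀ v, v ∈ Fs n d s →
      (muZ n v (tv n s v)).toNat ≤ N → v ∈ bpClosure n d d A by
    intro v hv; exact H _ v hv le_rfl
  intro N
  induction N using Nat.strong_induction_on with
  | _ N ih =>
  intro v hv hmu
  obtain ⟨i, hi, hgrid, hsum⟩ := Set.mem_iUnion₂.1 hv
  simp only [Finset.mem_Icc] at hi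
  obtain ⟨hi1, hi2⟩ := hi
  have htv : tv n s v = i := by
    rw [tv, hsum, Nat.add_sub_cancel_left]
  -- the d predecessors
  set g : Fin d → (Fin d → ℕ) :=
    fun j => if v j ≤ i then v + eVec d j else v - eVec d j with hgdef
  have hoffg : ∀ j k, k ≠ j → g j k = v k := by
    intro j k hk
    by_cases hc : v j ≤ i <;>
      simp [hgdef, hc, eVec, Pi.add_apply, Pi.sub_apply, hk]
  have hgj : ∀ j, (v j ≤ i ∧ g j j = v j + 1) ∨ (i < v j ∧ g j j = v j - 1) := by
    intro j
    by_cases hc : v j ≤ i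
    · exact Or.inl ⟨hc, by simp [hgdef, hc, eVec, Pi.add_apply]⟩
    · exact Or.inr ⟨by omega, by simp [hgdef, hc, eVec, Pi.sub_apply]⟩
  have hadj : ∀ j, gridAdj (g j) v := by
    intro j
    rcases hgj j with ⟨hc, hj⟩ | ⟨hc, hj⟩
    · exact ⟨j, Or.inl hj, fun k hk => hoffg j k hk⟩
    · refine ⟨j, Or.inr ?_, fun k hk => hoffg j k hk⟩
      have := (hgrid j).1
      omega
  have hinj : Function.Injective g := by
    intro a b hab
    by_contra hne
    have h1 : g a b = v b := hoffg a b (Ne.symm hne)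
    have h2 : g b b ≠ v b := by
      rcases hgj b with ⟨hc, hj⟩ | ⟨hc, hj⟩
      · rw [hj]; omega
      · rw [hj]; have := (hgrid b).1; omega
    exact h2 (by rw [← hab, h1])
  -- each predecessor is in the closure
  have hcl : ∀ j, g j ∈ bpClosure n d d A := by
    intro j
    rcases hgj j with ⟨hc, hj⟩ | ⟨hc, hj⟩
    · -- g j = v + eVec d j
      have hgeq : g j = v + eVec d j := by simp [hgdef, hc]
      have hwgrid : g j ∈ gridSet n d := by
        intro k
        rcases eq_or_ne k j with rfl | hk
        · rw [hj]; have := (hgrid k).1; omega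
        · rw [hoffg j k hk]; exact hgrid k
      have hwsum : ∑ k, g j k = (s - 1) * n + i + 1 := by
        rw [hgeq]
        have : ∑ k, (v + eVec d j) k = (∑ k, v k) + ∑ k, eVec d j k :=
          Finset.sum_add_distrib
        rw [this, hsum]
        simp [eVec]
      rcases eq_or_lt_of_le hi2 with hieq | hilt
      · -- top layer: lands in V_{sn}
        apply hA0
        right
        refine ⟨hwgrid, ?_⟩
        rw [hwsum]
        omega
      · -- recursive call
        have hwFs : g j ∈ Fs n d s := by
          apply Set.mem_iUnion₂.2
          exact ⟨i + 1, Finset.mem_Icc.2 ⟨by omega, by omega⟩, hwgrid, hwsum⟩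
        have hwtv : tv n s (g j) = i + 1 := by
          rw [tv, hwsum]; omega
        have hdec : muZ n (g j) (i + 1) ≤ muZ n v i - 4 := by
          rw [hgeq]; exact muZ_plus n v i j hc
        have hnn : 0 ≤ muZ n (g j) (i + 1) :=
          muZ_nonneg n (g j) (i + 1) (by omega) hn
        have hlt : (muZ n (g j) (tv n s (g j))).toNat < N := by
          rw [hwtv]
          have h5 : (muZ n v (tv n s v)).toNat ≤ N := hmu
          rw [htv] at h5
          omega
        exact ih _ hlt (g j) hwFs le_rfl
    · -- g j = v - eVec d j
      have hgeq : g j = v - eVec d j := by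
        have : ¬ v j ≤ i := by omega
        simp [hgdef, this]
      have hvj1 : 1 ≤ v j := (hgrid j).1
      have hwgrid : g j ∈ gridSet n d := by
        intro k
        rcases eq_or_ne k j with rfl | hk
        · rw [hj]; have := (hgrid k).2; omega
        · rw [hoffg j k hk]; exact hgrid k
      have hwsum : ∑ k, g j k + 1 = (s - 1) * n + i := by
        have hplus : ∀ k, g j k + eVec d j k = v k := by
          intro k
          rcases eq_or_ne k j with rfl | hk
          · rw [hj]; simp [eVec]; omega
          · rw [hoffg j k hk]; simp [eVec, hk]
        have h1 : (∑ k, g j k) + ∑ k, eVec d j k = ∑ k, v k := by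
          rw [← Finset.sum_add_distrib]
          exact Finset.sum_congr rfl fun k _ => hplus k
        have h2 : ∑ k, eVec d j k = 1 := by simp [eVec]
        rw [h2] at h1
        rw [h1, hsum]
      rcases eq_or_lt_of_le hi1 with hieq | hilt
      · -- bottom layer: lands in V_{(s-1)n}
        apply hA0
        left
        refine ⟨hwgrid, ?_⟩
        omega
      · -- recursive call
        have hwsum' : ∑ k, g j k = (s - 1) * n + (i - 1) := by omega
        have hwFs : g j ∈ Fs n d s := by
          apply Set.mem_iUnion₂.2
          exact ⟨i - 1, Finset.mem_Icc.2 ⟨by omega, by omega⟩, hwgrid, hwsum'⟩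
        have hwtv : tv n s (g j) = i - 1 := by
          rw [tv, hwsum', Nat.add_sub_cancel_left]
        have hdec : muZ n (g j) (i - 1) ≤ muZ n v i - 4 := by
          rw [hgeq]; exact muZ_minus n v i j hc hi1
        have hnn : 0 ≤ muZ n (g j) (i - 1) :=
          muZ_nonneg n (g j) (i - 1) (by omega) hn
        have hlt : (muZ n (g j) (tv n s (g j))).toNat < N := by
          rw [hwtv]
          have h5 : (muZ n v (tv n s v)).toNat ≤ N := hmu
          rw [htv] at h5
          omega
        exact ih _ hlt (g j) hwFs le_rfl
  exact closure_step hgrid g hinj hadj hcl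
end
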